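/- arXiv:1306.6900 — 7 statements merged into one kernel-verified Lean document; each statement's English description precedes it below -/
import Mathlib

section
/- Let f : ℝ → ℝ, x₀ ∈ ℝ and L ∈ ℝ. Then f is differentiable at x₀ with derivative L if and only if the following nonstandard condition holds: for every positive infinitesimal hyperreal r and every hyperreal v such that v/r is finite, the quotient (*f(x₀ + v) − f(x₀) − L·v)/r is infinitesimal. (This is the precise meaning, in dimension one, of '*f restricted to the r-module at x₀ is r-almost affine at x₀, stably for all positive infinitesimals r, with linear part having r-standard part L'.) -/
open Hyperreal Filter

/-- The canonical hyperreal extension `*f : ℝ* → ℝ*` of `f : ℝ → ℝ` (germ-map lift). -/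
noncomputable def hyperExt (f : ℝ → ℝ) : ℝ* → ℝ* := fun x => Filter.Germ.map f x

/-- A hyperreal is finite (nearstandard) if it is bounded in absolute value by some natural. -/
def HFinite (x : ℝ*) : Prop := ∃ n : ℕ, |x| < (n : ℝ*)

/-- Nonstandard characterization of differentiability:  `f` has derivative `L` at `x₀` iff
for every positive infinitesimal `r` and every `v` with `v/r` finite, the quotient
`(*f(x₀ + v) − f(x₀) − L·v)/r` is infinitesimal. -/
theorem stmt0 (f : ℝ → ℝ) (x₀ L : ℝ) :
    HasDerivAt f L x₀ ↔
      ∀ r : ℝ*, 0 < r → Infinitesimal r →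
        ∀ v : ℝ*, HFinite (v / r) →
          Infinitesimal ((hyperExt f ((x₀ : ℝ*) + v) - (f x₀ : ℝ*) - (L : ℝ*) * v) / r) := by
  constructor
  · intro hd r hr0 hri v hv
    obtain ⟨rs, rfl⟩ := ofSeq_surjective r
    obtain ⟨vs, rfl⟩ := ofSeq_surjective v
    obtain ⟨N, hN⟩ := hv
    have hN' : ∀ᶠ n in hyperfilter ℕ, |vs n / rs n| < (N : ℝ) := by
      have : ofSeq (fun n => |vs n / rs n|) < ofSeq (fun _ => (N : ℝ)) := hN
      exact ofSeq_lt_ofSeq.1 this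
    have hrpos : ∀ᶠ n in hyperfilter ℕ, 0 < rs n := by
      have : ofSeq (fun _ => (0:ℝ)) < ofSeq rs := hr0
      exact ofSeq_lt_ofSeq.1 this
    have key : ∀ ee2 : ℝ, 0 < ee2 → ∃ δ : ℝ, 0 < δ ∧ ∀ h : ℝ, |h| < δ →
        |f (x₀ + h) - f x₀ - L * h| ≤ ee2 * |h| := by
      intro ee2 hee2
      have h1 := (hasDerivAt_iff_isLittleO.mp hd).def hee2
      rw [Metric.eventually_nhds_iff] at h1
      obtain ⟨δ, hδ, h2⟩ := h1
      refine ⟨δ, hδ, fun h hh => ?_⟩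
      have := h2 (y := x₀ + h) (by simpa [Real.dist_eq] using hh)
      simpa [Real.norm_eq_abs, smul_eq_mul, mul_comm] using this
    -- target as ofSeq
    show Infinitesimal (ofSeq (fun n => (f (x₀ + vs n) - f x₀ - L * vs n) / rs n))
    rw [infinitesimal_def]
    intro ee hee
    have hee2 : (0:ℝ) < ee / (N + 1) := by positivity
    obtain ⟨δ, hδ, hkey⟩ := key _ hee2
    have hrδ : ∀ᶠ n in hyperfilter ℕ, rs n < δ / (N + 1) := by
      have h3 := (infinitesimal_def.mp hri (δ / (N + 1)) (by positivity)).2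
      have : ofSeq rs < ofSeq (fun _ => δ / (N + 1)) := h3
      exact ofSeq_lt_ofSeq.1 this
    have main : ∀ᶠ n in hyperfilter ℕ,
        |(f (x₀ + vs n) - f x₀ - L * vs n) / rs n| < ee := by
      filter_upwards [hN', hrpos, hrδ] with n h1 h2 h3
      have hvn : |vs n| / rs n < N := by rwa [abs_div, abs_of_pos h2] at h1
      have hvn2 : |vs n| < N * rs n := (div_lt_iff₀ h2).1 hvn
      have hNn : (0:ℝ) ≤ (N:ℝ) := Nat.cast_nonneg N
      have h3' : rs n * (↑N + 1) < δ := by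
        rwa [lt_div_iff₀ (by positivity : (0:ℝ) < (N:ℝ) + 1)] at h3
      have hid : (N:ℝ) * rs n + rs n = rs n * (↑N + 1) := by ring
      have hvδ : |vs n| < δ := by nlinarith
      have h4 := hkey (vs n) hvδ
      rw [abs_div, abs_of_pos h2, div_lt_iff₀ h2]
      have heeq : ee / (N + 1) * (N + 1) = ee := by field_simp
      nlinarith [mul_le_mul_of_nonneg_left hvn2.le hee2.le, mul_pos hee2 h2]
    constructor
    · have : ofSeq (fun _ => -ee) < ofSeq (fun n => (f (x₀ + vs n) - f x₀ - L * vs n) / rs n) :=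
        ofSeq_lt_ofSeq.2 (main.mono fun n hn => (abs_lt.1 hn).1)
      exact this
    · exact ofSeq_lt_ofSeq.2 (main.mono fun n hn => (abs_lt.1 hn).2)
  · intro H
    rw [hasDerivAt_iff_tendsto_slope]
    rw [Metric.tendsto_nhdsWithin_nhds]
    by_contra hc
    push_neg at hc
    obtain ⟨ee, hee, hc⟩ := hc
    choose x hx1 hx2 hx3 using fun n : ℕ => hc (1 / (n + 1)) (by positivity)
    set hs : ℕ → ℝ := fun n => x n - x₀ with hhs
    have hsne : ∀ n, hs n ≠ 0 := fun n => sub_ne_zero.2 (by simpa using hx1 n)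
    have hspos : ∀ n, 0 < |hs n| := fun n => abs_pos.2 (hsne n)
    have hr0 : (0:ℝ*) < ofSeq (fun n => |hs n|) :=
      ofSeq_lt_ofSeq.2 (Eventually.of_forall hspos)
    have hri : Infinitesimal (ofSeq (fun n => |hs n|)) := by
      apply infinitesimal_of_tendsto_zero
      refine squeeze_zero (fun n => abs_nonneg _)
        (fun n => le_of_lt ?_) tendsto_one_div_add_atTop_nhds_zero_nat
      simpa [Real.dist_eq, hhs] using hx2 n
    have hfin : HFinite (ofSeq hs / ofSeq (fun n => |hs n|)) := by
      refine ⟨2, ?_⟩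
      have : ofSeq (fun n => abs (hs n / |hs n|)) < ofSeq (fun _ => ((2:ℕ):ℝ)) := by
        apply ofSeq_lt_ofSeq.2
        apply Eventually.of_forall
        intro n
        rw [abs_div, abs_abs, div_self (hspos n).ne']
        norm_num
      exact this
    have := H _ hr0 hri (ofSeq hs) hfin
    have hinf : Infinitesimal
        (ofSeq (fun n => (f (x₀ + hs n) - f x₀ - L * hs n) / |hs n|)) := this
    have hbig : ∀ n, ee ≤ abs ((f (x₀ + hs n) - f x₀ - L * hs n) / |hs n|) := by
      intro n
      have h3 := hx3 n
      rw [Real.dist_eq] at h3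
      have hq : abs ((f (x₀ + hs n) - f x₀ - L * hs n) / |hs n|)
          = |slope f x₀ (x n) - L| := by
        rw [abs_div, abs_abs, ← abs_div]
        congr 1
        rw [slope_def_field, hhs]
        field_simp [show x n - x₀ ≠ 0 from hsne n]
        ring
      rw [hq]
      exact h3
    obtain ⟨h1, h2⟩ := infinitesimal_def.mp hinf ee hee
    have hsm : ∀ᶠ n in hyperfilter ℕ,
        abs ((f (x₀ + hs n) - f x₀ - L * hs n) / |hs n|) < ee := by
      have e1 : ∀ᶠ n in hyperfilter ℕ,
          -ee < (f (x₀ + hs n) - f x₀ - L * hs n) / |hs n| := by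
        have : ofSeq (fun _ => -ee) < ofSeq (fun n => (f (x₀ + hs n) - f x₀ - L * hs n) / |hs n|) := h1
        exact ofSeq_lt_ofSeq.1 this
      have e2 : ∀ᶠ n in hyperfilter ℕ,
          (f (x₀ + hs n) - f x₀ - L * hs n) / |hs n| < ee := by
        have : ofSeq (fun n => (f (x₀ + hs n) - f x₀ - L * hs n) / |hs n|) < ofSeq (fun _ => ee) := h2
        exact ofSeq_lt_ofSeq.1 this
      filter_upwards [e1, e2] with n hn1 hn2
      exact abs_lt.2 ⟨hn1, hn2⟩
    obtain ⟨n, hn⟩ := hsm.exists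
    exact absurd (hbig n) (not_le.2 hn)
end

section
/- Let F : ℝ* → ℝ* be a function, r a positive hyperreal, u₀ ∈ ℝ* and t₀ = F(u₀). Suppose F is r-almost affine at u₀, i.e., for all finite hyperreals α, β with α + β = 1 and all hyperreals v, w with (v − u₀)/r and (w − u₀)/r finite, F(αv + βw) − αF(v) − βF(w) = o(r). Then the translate L(v) := F(u₀ + v) − t₀ is r-almost linear: for all finite hyperreals α, β and all hyperreals v, w with v/r and w/r finite, L(αv + βw) − αL(v) − βL(w) = o(r). In particular, an r-almost affine map fixing its base point is r-almost linear. -/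
open Hyperreal Filter

lemma hfin_add {x y : ℝ*} (hx : HFinite x) (hy : HFinite y) : HFinite (x + y) := by
  obtain ⟨n, hn⟩ := hx; obtain ⟨m, hm⟩ := hy
  exact ⟨n + m, by push_cast; calc |x + y| ≤ |x| + |y| := abs_add_le _ _
    _ < (n : ℝ*) + m := add_lt_add hn hm⟩

lemma hfin_mul {x y : ℝ*} (hx : HFinite x) (hy : HFinite y) : HFinite (x * y) := by
  obtain ⟨n, hn⟩ := hx; obtain ⟨m, hm⟩ := hy
  refine ⟨n * m, ?_⟩
  push_cast
  rw [abs_mul]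
  exact mul_lt_mul'' hn hm (abs_nonneg _) (abs_nonneg _)

lemma hfin_const (c : ℝ) : HFinite (c : ℝ*) := by
  obtain ⟨n, hn⟩ := exists_nat_gt |c|
  refine ⟨n, ?_⟩
  have : ((|c| : ℝ) : ℝ*) < ((n : ℝ) : ℝ*) := coe_lt_coe.2 hn
  rw [coe_abs, show ((n : ℝ) : ℝ*) = (n : ℝ*) from map_natCast coeRingHom n] at this
  exact this

/-- The translate `L(v) := F(u₀ + v) − t₀` of an `r`-almost affine map at `u₀`
(with `t₀ = F(u₀)`) is `r`-almost linear. -/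
theorem stmt1 (F : ℝ* → ℝ*) (r : ℝ*) (hr : 0 < r) (u₀ t₀ : ℝ*) (ht₀ : t₀ = F u₀)
    (haff : ∀ α β : ℝ*, HFinite α → HFinite β → α + β = 1 →
      ∀ v w : ℝ*, HFinite ((v - u₀) / r) → HFinite ((w - u₀) / r) →
        Infinitesimal ((F (α * v + β * w) - α * F v - β * F w) / r)) :
    ∀ α β : ℝ*, HFinite α → HFinite β →
      ∀ v w : ℝ*, HFinite (v / r) → HFinite (w / r) →
        Infinitesimal (((F (u₀ + (α * v + β * w)) - t₀)
          - α * (F (u₀ + v) - t₀) - β * (F (u₀ + w) - t₀)) / r) := by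
  intro α β hα hβ v w hv hw
  have hr0 : r ≠ 0 := hr.ne'
  have h1 : HFinite (1 : ℝ*) := by simpa using hfin_const 1
  have hneg : ∀ x : ℝ*, HFinite x → HFinite (-x) := by
    rintro x ⟨n, hn⟩; exact ⟨n, by simpa using hn⟩
  have h1α : HFinite (1 - α) := by
    have := hfin_add h1 (hneg α hα); simpa [sub_eq_add_neg] using this
  have h1β : HFinite (1 - β) := by
    have := hfin_add h1 (hneg β hβ); simpa [sub_eq_add_neg] using this
  have h0 : HFinite ((u₀ - u₀) / r) := ⟨1, by simp⟩
  have hvv : HFinite ((u₀ + v - u₀) / r) := by simpa using hv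
  have hww : HFinite ((u₀ + w - u₀) / r) := by simpa using hw
  have hαv : HFinite ((u₀ + α * v - u₀) / r) := by
    have : (u₀ + α * v - u₀) / r = α * (v / r) := by field_simp; ring
    rw [this]; exact hfin_mul hα hv
  have hβw : HFinite ((u₀ + β * w - u₀) / r) := by
    have : (u₀ + β * w - u₀) / r = β * (w / r) := by field_simp; ring
    rw [this]; exact hfin_mul hβ hw
  set m : ℝ* := u₀ + (α * v + β * w) / 2 with hm
  have hmfin : HFinite ((m - u₀) / r) := by
    have : (m - u₀) / r = ((1/2 : ℝ) : ℝ*) * (α * (v / r) + β * (w / r)) := by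
      rw [hm]; field_simp; push_cast; ring
    rw [this]
    exact hfin_mul (hfin_const (1/2)) (hfin_add (hfin_mul hα hv) (hfin_mul hβ hw))
  have h2 : HFinite (2 : ℝ*) := by simpa using hfin_const 2
  have hn1 : HFinite (-1 : ℝ*) := by simpa using hneg 1 h1
  have hhalf : HFinite ((1:ℝ*)/2) := by
    have := hfin_const (1/2 : ℝ); simpa using this
  -- A : affine with (α, 1-α) at (u₀+v, u₀)
  have hA := haff α (1 - α) hα h1α (by ring) (u₀ + v) u₀ hvv h0
  have eA : α * (u₀ + v) + (1 - α) * u₀ = u₀ + α * v := by ring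
  rw [eA] at hA
  -- B : affine with (β, 1-β) at (u₀+w, u₀)
  have hB := haff β (1 - β) hβ h1β (by ring) (u₀ + w) u₀ hww h0
  have eB : β * (u₀ + w) + (1 - β) * u₀ = u₀ + β * w := by ring
  rw [eB] at hB
  -- C : affine with (1/2, 1/2) at (u₀+αv, u₀+βw)
  have hC := haff ((1:ℝ*)/2) ((1:ℝ*)/2) hhalf hhalf (by ring) (u₀ + α * v) (u₀ + β * w) hαv hβw
  have eC : (1:ℝ*)/2 * (u₀ + α * v) + (1:ℝ*)/2 * (u₀ + β * w) = m := by
    rw [hm]; ring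
  rw [eC] at hC
  -- D : affine with (2, -1) at (m, u₀)
  have hD := haff 2 (-1) h2 hn1 (by ring) m u₀ hmfin h0
  have eD : (2:ℝ*) * m + (-1) * u₀ = u₀ + (α * v + β * w) := by rw [hm]; ring
  rw [eD] at hD
  have key : ((F (u₀ + (α * v + β * w)) - t₀)
          - α * (F (u₀ + v) - t₀) - β * (F (u₀ + w) - t₀)) / r
      = (F (u₀ + α * v) - α * F (u₀ + v) - (1 - α) * F u₀) / r
      + (F (u₀ + β * w) - β * F (u₀ + w) - (1 - β) * F u₀) / r
      + ((F m - (1:ℝ*)/2 * F (u₀ + α * v) - (1:ℝ*)/2 * F (u₀ + β * w)) / r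
        + (F m - (1:ℝ*)/2 * F (u₀ + α * v) - (1:ℝ*)/2 * F (u₀ + β * w)) / r)
      + (F (u₀ + (α * v + β * w)) - 2 * F m - (-1) * F u₀) / r := by
    rw [ht₀]; field_simp; ring
  rw [key]
  exact ((hA.add hB).add (hC.add hC)).add hD
end

section
/- For every n ≥ 1 and every j ∈ ℤ, the partial sum B_n of the blancmange function is affine on the interval [j/2^n, (j+1)/2^n]: there exist real numbers a and q such that B_n(t) = a·t + q for all t ∈ [j/2^n, (j+1)/2^n]. -/
/-- Distance from `t` to the nearest integer: the sawtooth generator of the blancmange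
function. -/
noncomputable def saw (t : ℝ) : ℝ := |t - round t|

/-- `s_k(t) = s(2^k t)/2^k`. -/
noncomputable def sawk (k : ℕ) (t : ℝ) : ℝ := saw (2 ^ k * t) / 2 ^ k

/-- Partial sums `B_n(t) = ∑_{k<n} s_k(t)`. -/
noncomputable def blancN (n : ℕ) (t : ℝ) : ℝ := ∑ k ∈ Finset.range n, sawk k t

lemma saw_affine (m : ℤ) : ∃ a q : ℝ, ∀ t ∈ Set.Icc ((m : ℝ) / 2) (((m : ℝ) + 1) / 2),
    saw t = a * t + q := by
  rcases Int.even_or_odd m with ⟨l, hl⟩ | ⟨l, hl⟩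
  · -- m = l + l, interval [l, l + 1/2]
    refine ⟨1, -l, fun t ht => ?_⟩
    obtain ⟨h1, h2⟩ := ht
    rw [hl] at h1 h2
    push_cast at h1 h2
    have hfl : ⌊t⌋ = l := by
      rw [Int.floor_eq_iff]
      constructor <;> push_cast <;> linarith
    have hfr : Int.fract t = t - l := by
      rw [Int.fract, hfl]
    rw [saw, abs_sub_round_eq_min, hfr, min_eq_left (by linarith)]
    ring
  · -- m = 2l + 1, interval [l + 1/2, l + 1]
    refine ⟨-1, l + 1, fun t ht => ?_⟩
    obtain ⟨h1, h2⟩ := ht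
    rw [hl] at h1 h2
    push_cast at h1 h2
    rcases lt_or_eq_of_le h2 with hlt | heq
    · have hfl : ⌊t⌋ = l := by
        rw [Int.floor_eq_iff]
        constructor <;> push_cast <;> linarith
      have hfr : Int.fract t = t - l := by
        rw [Int.fract, hfl]
      rw [saw, abs_sub_round_eq_min, hfr, min_eq_right (by linarith)]
      ring
    · have : t = (l : ℝ) + 1 := by linarith
      subst this
      have : ((l : ℝ) + 1) = ((l + 1 : ℤ) : ℝ) := by push_cast; ring
      rw [saw, this, abs_sub_round_eq_min, Int.fract_intCast]
      simp

lemma sawk_affine (n k : ℕ) (hk : k < n) (j : ℤ) :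
    ∃ a q : ℝ, ∀ t ∈ Set.Icc ((j : ℝ) / 2 ^ n) (((j : ℝ) + 1) / 2 ^ n),
      sawk k t = a * t + q := by
  obtain ⟨d, hd⟩ : ∃ d : ℕ, n = k + 1 + d := ⟨n - (k + 1), by omega⟩
  set m : ℤ := ⌊(j : ℝ) / 2 ^ d⌋ with hm
  obtain ⟨a, q, hq⟩ := saw_affine m
  refine ⟨a, q / 2 ^ k, fun t ht => ?_⟩
  obtain ⟨h1, h2⟩ := ht
  have hd2 : (0:ℝ) < 2 ^ d := by positivity
  have hk2 : (0:ℝ) < 2 ^ k := by positivity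
  have hml : (m : ℝ) ≤ (j : ℝ) / 2 ^ d := Int.floor_le _
  have hmu : (j : ℝ) + 1 ≤ ((m : ℝ) + 1) * 2 ^ d := by
    have h := Int.lt_floor_add_one ((j : ℝ) / 2 ^ d)
    have hj : (j : ℝ) < ((m : ℝ) + 1) * 2 ^ d := by
      rw [div_lt_iff₀ hd2] at h; linarith
    have : j < (m + 1) * 2 ^ d := by exact_mod_cast hj
    have : j + 1 ≤ (m + 1) * 2 ^ d := this
    exact_mod_cast this
  have hpow : (2:ℝ) ^ n = 2 ^ k * (2 * 2 ^ d) := by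
    rw [hd]; ring
  have hmem : 2 ^ k * t ∈ Set.Icc ((m : ℝ) / 2) (((m : ℝ) + 1) / 2) := by
    constructor
    · have : (j : ℝ) / 2 ^ n ≤ t := h1
      rw [hpow, div_le_iff₀ (by positivity)] at this
      rw [div_le_iff₀ (by norm_num : (0:ℝ) < 2)]
      have hml' : (m : ℝ) * 2 ^ d ≤ (j : ℝ) := by
        rw [le_div_iff₀ hd2] at hml; linarith
      nlinarith
    · have : t ≤ ((j : ℝ) + 1) / 2 ^ n := h2
      rw [hpow, le_div_iff₀ (by positivity)] at this
      rw [le_div_iff₀ (by norm_num : (0:ℝ) < 2)]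
      nlinarith
  have := hq _ hmem
  rw [sawk, this]
  field_simp

/-- For `n ≥ 1` and `j ∈ ℤ`, the partial sum `B_n` is affine on `[j/2^n, (j+1)/2^n]`. -/
theorem stmt4 : ∀ n : ℕ, 1 ≤ n → ∀ j : ℤ,
    ∃ a q : ℝ, ∀ t ∈ Set.Icc ((j : ℝ) / 2 ^ n) (((j : ℝ) + 1) / 2 ^ n),
      blancN n t = a * t + q := by
  intro n hn j
  have key : ∀ k, k < n → ∃ a q : ℝ,
      ∀ t ∈ Set.Icc ((j : ℝ) / 2 ^ n) (((j : ℝ) + 1) / 2 ^ n),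
        sawk k t = a * t + q := fun k hk => sawk_affine n k hk j
  choose! a q hq using key
  refine ⟨∑ k ∈ Finset.range n, a k, ∑ k ∈ Finset.range n, q k, fun t ht => ?_⟩
  rw [blancN, Finset.sum_mul, ← Finset.sum_add_distrib]
  exact Finset.sum_congr rfl fun k hk => hq k (Finset.mem_range.mp hk) t ht
end

section
/- The blancmange function B is not affine on any nontrivial interval: for all real numbers α < β, there do not exist real numbers a and q such that B(t) = a·t + q for all t ∈ (α, β). -/
/-- The blancmange (Takagi) function `B(t) = ∑_{k=0}^∞ s_k(t)`. -/
noncomputable def blanc (t : ℝ) : ℝ := ∑' k : ℕ, sawk k t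

lemma saw_nonneg (t : ℝ) : 0 ≤ saw t := abs_nonneg _
lemma saw_le_half (t : ℝ) : saw t ≤ 1/2 := abs_sub_round t
lemma saw_int (m : ℤ) : saw (m:ℝ) = 0 := by simp [saw]
lemma saw_add_int (t : ℝ) (m : ℤ) : saw (t + m) = saw t := by
  unfold saw
  rw [round_add_intCast]
  push_cast
  ring_nf

lemma summable_sawk (t : ℝ) : Summable fun k => sawk k t := by
  apply Summable.of_nonneg_of_le
      (fun k => div_nonneg (saw_nonneg _) (by positivity))
      (fun k => ?_) (summable_geometric_of_lt_one (by norm_num) (by norm_num) :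
        Summable fun k : ℕ => (1/2:ℝ)^k)
  calc sawk k t ≤ 1 / 2^k := by
        unfold sawk; gcongr; exact (saw_le_half _).trans (by norm_num)
    _ = (1/2:ℝ)^k := by rw [div_pow, one_pow]

lemma blanc_eq (t : ℝ) : blanc t = saw t + blanc (2*t) / 2 := by
  have hs := summable_sawk t
  rw [blanc, Summable.tsum_eq_zero_add hs]
  congr 1
  · simp [sawk]
  · have h : ∀ k : ℕ, sawk (k+1) t = sawk k (2*t) / 2 := by
      intro k
      unfold sawk
      rw [pow_succ, div_div]
      ring_nf
    rw [tsum_congr h, tsum_div_const]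
    rfl

lemma blanc_add_int (t : ℝ) (m : ℤ) : blanc (t + m) = blanc t := by
  unfold blanc
  apply tsum_congr
  intro k
  have h : (2:ℝ)^k * (t + m) = 2^k*t + ((2^k*m : ℤ):ℝ) := by push_cast; ring
  rw [sawk, sawk, h, saw_add_int]

lemma blanc_dyadic (t : ℝ) (n : ℕ) (m : ℤ) (h : 2^n * t = (m:ℝ)) :
    blanc t = ∑ k ∈ Finset.range n, sawk k t := by
  apply tsum_eq_sum
  intro k hk
  simp only [Finset.mem_range, not_lt] at hk
  obtain ⟨i, rfl⟩ := Nat.exists_eq_add_of_le hk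
  have h2 : (2:ℝ)^(n+i) * t = ((2^i * m : ℤ):ℝ) := by
    push_cast
    rw [pow_add, mul_comm ((2:ℝ)^n), mul_assoc, h]
  rw [sawk, h2, saw_int, zero_div]

lemma blanc_half : blanc (1/2) = 1/2 := by
  rw [blanc_dyadic (1/2) 1 1 (by norm_num)]
  simp [sawk, saw, round_eq]
  norm_num [Int.floor_eq_iff]

lemma blanc_quarter : blanc (1/4) = 1/2 := by
  rw [blanc_dyadic (1/4) 2 1 (by norm_num)]
  rw [Finset.sum_range_succ, Finset.sum_range_one]
  simp only [sawk, saw]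
  norm_num [round_eq, Int.floor_eq_iff]

lemma blanc_eighth : blanc (1/8) = 3/8 := by
  rw [blanc_dyadic (1/8) 3 1 (by norm_num)]
  rw [Finset.sum_range_succ, Finset.sum_range_succ, Finset.sum_range_one]
  simp only [sawk, saw]
  norm_num [round_eq, Int.floor_eq_iff]

lemma saw_affine_half (q : ℤ) :
    ∃ c d : ℝ, ∀ t ∈ Set.Ioo ((q:ℝ)/2) (((q:ℝ)+1)/2), saw t = c*t + d := by
  rcases Int.even_or_odd q with ⟨m, hm⟩ | ⟨m, hm⟩
  · refine ⟨1, -(m:ℝ), ?_⟩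
    rintro t ⟨h1, h2⟩
    subst hm
    push_cast at h1 h2
    have hr : round t = m := by
      rw [round_eq, Int.floor_eq_iff]
      constructor <;> push_cast <;> linarith
    rw [saw, hr, abs_of_pos (by linarith)]
    ring
  · refine ⟨-1, (m:ℝ)+1, ?_⟩
    rintro t ⟨h1, h2⟩
    subst hm
    push_cast at h1 h2
    have hr : round t = m + 1 := by
      rw [round_eq, Int.floor_eq_iff]
      constructor <;> push_cast <;> linarith
    rw [saw, hr, abs_of_neg (by push_cast; linarith)]
    push_cast; ring

lemma saw_affine_cell (n : ℕ) (j : ℤ) :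
    ∃ c d : ℝ, ∀ t ∈ Set.Ioo ((j:ℝ)/2^(n+1)) (((j:ℝ)+1)/2^(n+1)), saw t = c*t + d := by
  set q : ℤ := ⌊(j:ℝ)/2^n⌋ with hq
  obtain ⟨c, d, h⟩ := saw_affine_half q
  refine ⟨c, d, fun t ht => h t ?_⟩
  have hpow : (0:ℝ) < 2^n := by positivity
  have h1 : (q:ℝ) * 2^n ≤ (j:ℝ) := by
    have := Int.floor_le ((j:ℝ)/2^n)
    rw [le_div_iff₀ hpow] at this
    exact this
  have h2 : (j:ℝ) + 1 ≤ ((q:ℝ)+1) * 2^n := by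
    have h2' : (j:ℝ)/2^n < (q:ℝ)+1 := Int.lt_floor_add_one _
    rw [div_lt_iff₀ hpow] at h2'
    have : (j:ℤ) + 1 ≤ (q+1) * 2^n := by
      have : (j:ℤ) < (q+1) * 2^n := by exact_mod_cast h2'
      omega
    exact_mod_cast this
  have hps : (2:ℝ)^(n+1) = 2^n * 2 := pow_succ 2 n
  constructor
  · calc (q:ℝ)/2 ≤ (j:ℝ)/2^(n+1) := by
          rw [div_le_div_iff₀ (by norm_num) (by positivity), hps]
          nlinarith
      _ < t := ht.1
  · calc t < ((j:ℝ)+1)/2^(n+1) := ht.2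
      _ ≤ ((q:ℝ)+1)/2 := by
          rw [div_le_div_iff₀ (by positivity) (by norm_num), hps]
          nlinarith

lemma not_affine_cell : ∀ n : ℕ, ∀ j : ℤ, ∀ a q : ℝ,
    (∀ t ∈ Set.Ioo ((j:ℝ)/2^n) (((j:ℝ)+1)/2^n), blanc t = a*t + q) → False := by
  intro n
  induction n with
  | zero =>
    intro j a q h
    have key : ∀ u ∈ Set.Ioo (0:ℝ) 1, blanc u = a*u + (a*j + q) := by
      intro u hu
      have hmem : u + (j:ℝ) ∈ Set.Ioo ((j:ℝ)/2^0) (((j:ℝ)+1)/2^0) := by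
        simp only [pow_zero, div_one]
        exact ⟨by linarith [hu.1], by linarith [hu.2]⟩
      have := h (u + j) hmem
      rw [blanc_add_int u j] at this
      rw [this]; ring
    have h1 := key (1/8) (by norm_num)
    have h2 := key (1/4) (by norm_num)
    have h3 := key (1/2) (by norm_num)
    rw [blanc_eighth] at h1
    rw [blanc_quarter] at h2
    rw [blanc_half] at h3
    linarith
  | succ n ih =>
    intro j a q h
    obtain ⟨c, d, hcd⟩ := saw_affine_cell n j
    apply ih j (a - c) (2*q - 2*d)
    intro u hu
    have hpow : (0:ℝ) < 2^n := by positivity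
    have hps : (2:ℝ)^(n+1) = 2^n * 2 := pow_succ 2 n
    have ht : u/2 ∈ Set.Ioo ((j:ℝ)/2^(n+1)) (((j:ℝ)+1)/2^(n+1)) := by
      constructor
      · rw [hps, div_mul_eq_div_div]
        linarith [hu.1]
      · rw [hps, div_mul_eq_div_div]
        linarith [hu.2]
    have hb := blanc_eq (u/2)
    rw [show 2*(u/2) = u by ring] at hb
    have e1 : blanc u = 2*blanc (u/2) - 2*saw (u/2) := by linarith
    rw [e1, h (u/2) ht, hcd (u/2) ht]
    ring

/-- The blancmange function is not affine on any nontrivial open interval. -/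
theorem stmt7 : ∀ α β : ℝ, α < β →
    ¬ ∃ a q : ℝ, ∀ t ∈ Set.Ioo α β, blanc t = a * t + q := by
  intro α β hab ⟨a, q, h⟩
  obtain ⟨n, hn⟩ := pow_unbounded_of_one_lt (2/(β-α)) (one_lt_two (α := ℝ))
  have hpow : (0:ℝ) < 2^n := by positivity
  have hn2 : 2 < (β - α) * 2^n := by
    rw [div_lt_iff₀ (by linarith)] at hn
    linarith
  set j : ℤ := ⌊α * 2^n⌋ + 1 with hj
  apply not_affine_cell n j a q
  intro t ht
  apply h t
  have hf1 : α * 2^n < (j:ℝ) := by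
    rw [hj]; push_cast
    linarith [Int.lt_floor_add_one (α * 2^n)]
  have hf2 : (j:ℝ) + 1 ≤ α * 2^n + 2 := by
    rw [hj]; push_cast
    linarith [Int.floor_le (α * 2^n)]
  constructor
  · calc α < (j:ℝ)/2^n := by rw [lt_div_iff₀ hpow]; linarith
      _ < t := ht.1
  · calc t < ((j:ℝ)+1)/2^n := ht.2
      _ < β := by rw [div_lt_iff₀ hpow]; nlinarith
end

section
/- Let p ≥ 2 be an integer, s ∈ 𝒮_p and c ≥ 1 an integer. Then the generalized blancmange function B(s,c) is not affine on any nonempty open subinterval of [0,1]: for all 0 ≤ α < β ≤ 1, there do not exist real numbers a and q such that B(s,c)(t) = a·t + q for all t ∈ (α, β). -/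
open Filter

/-- A generator `s ∈ 𝒮_p`: a continuous `1`-periodic function with `s 0 = 0`, affine on each
interval `[i/p, (i+1)/p]` for `0 ≤ i < p`, and nonzero at some interior grid point `i₀/p`. -/
def IsGenerator (p : ℕ) (s : ℝ → ℝ) : Prop :=
  Continuous s ∧ (∀ t : ℝ, s (t + 1) = s t) ∧ s 0 = 0 ∧
    (∀ i : ℕ, i < p → ∃ a q : ℝ,
      ∀ t ∈ Set.Icc ((i : ℝ) / p) (((i : ℝ) + 1) / p), s t = a * t + q) ∧
    (∃ i₀ : ℕ, 0 < i₀ ∧ i₀ < p ∧ s ((i₀ : ℝ) / p) ≠ 0)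

/-- `s_k(t) = s(b^k t)/b^k`. -/
noncomputable def genk (s : ℝ → ℝ) (b : ℕ) (k : ℕ) (t : ℝ) : ℝ :=
  s ((b : ℝ) ^ k * t) / (b : ℝ) ^ k

/-- Partial sums `B_n(t) = ∑_{k<n} s_k(t)`. -/
noncomputable def genBN (s : ℝ → ℝ) (b : ℕ) (n : ℕ) (t : ℝ) : ℝ :=
  ∑ k ∈ Finset.range n, genk s b k t

/-- The generalized blancmange function `B(s,c)(t) = ∑_{k=0}^∞ s(b^k t)/b^k`, `b = c·p`. -/
noncomputable def genB (s : ℝ → ℝ) (b : ℕ) (t : ℝ) : ℝ := ∑' k : ℕ, genk s b k t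

section Aux

variable {s : ℝ → ℝ} {b : ℕ}

lemma s_int_eq (hper : ∀ t : ℝ, s (t + 1) = s t) (z : ℤ) (t : ℝ) : s (t + z) = s t := by
  have h : Function.Periodic s 1 := hper
  simpa using (h.int_mul z) t

lemma exists_bound (hcont : Continuous s) (hper : ∀ t : ℝ, s (t + 1) = s t) :
    ∃ M : ℝ, ∀ t, |s t| ≤ M := by
  have h : Function.Periodic s 1 := hper
  have hb := h.isBounded_of_continuous one_ne_zero hcont
  obtain ⟨M, hM⟩ := isBounded_iff_forall_norm_le.mp hb
  exact ⟨M, fun t => hM _ (Set.mem_range_self t)⟩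

lemma genk_bound {M : ℝ} (hM : ∀ t, |s t| ≤ M) (hb : 2 ≤ b) (k : ℕ) (t : ℝ) :
    ‖genk s b k t‖ ≤ M * (1 / (b : ℝ)) ^ k := by
  have hb0 : (0:ℝ) < (b:ℝ) ^ k := by positivity
  rw [Real.norm_eq_abs, genk, abs_div, abs_of_pos hb0, div_le_iff₀ hb0]
  have := hM ((b : ℝ) ^ k * t)
  calc |s ((b : ℝ) ^ k * t)| ≤ M := this
    _ = M * (1 / (b : ℝ)) ^ k * (b:ℝ)^k := by
        rw [one_div, inv_pow, mul_assoc, inv_mul_cancel₀ (ne_of_gt hb0), mul_one]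

lemma summable_bound {M : ℝ} (hM : ∀ t, |s t| ≤ M) (hb : 2 ≤ b) :
    Summable (fun k : ℕ => M * (1 / (b : ℝ)) ^ k) := by
  have hb1 : (1:ℝ) < b := by exact_mod_cast (by omega : 1 < b)
  refine (summable_geometric_of_lt_one (by positivity) ?_).mul_left M
  rw [div_lt_one (by linarith)]; linarith

lemma summable_genk {M : ℝ} (hM : ∀ t, |s t| ≤ M) (hb : 2 ≤ b) (t : ℝ) :
    Summable (fun k => genk s b k t) :=
  Summable.of_norm_bounded (summable_bound hM hb) (fun k => genk_bound hM hb k t)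

lemma genB_continuous {M : ℝ} (hcont : Continuous s) (hM : ∀ t, |s t| ≤ M) (hb : 2 ≤ b) :
    Continuous (genB s b) := by
  refine continuous_tsum (fun k => ?_) (summable_bound hM hb)
    (fun k t => genk_bound hM hb k t)
  exact (hcont.comp (continuous_const.mul continuous_id)).div_const _

lemma genB_zero (h0 : s 0 = 0) : genB s b 0 = 0 := by
  simp [genB, genk, h0]

lemma genB_int (hper : ∀ t : ℝ, s (t + 1) = s t) (z : ℤ) (t : ℝ) :
    genB s b (t + z) = genB s b t := by
  unfold genB
  refine tsum_congr fun k => ?_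
  unfold genk
  have h : (b:ℝ)^k * (t + z) = (b:ℝ)^k * t + ((b^k * z : ℤ) : ℝ) := by push_cast; ring
  rw [h, s_int_eq hper]

lemma genB_succ {M : ℝ} (hM : ∀ t, |s t| ≤ M) (hb : 2 ≤ b) (t : ℝ) :
    genB s b t = s t + genB s b ((b:ℝ) * t) / b := by
  have h0 : genk s b 0 t = s t := by simp [genk]
  have h : ∀ k, genk s b (k+1) t = genk s b k ((b:ℝ) * t) / b := by
    intro k
    unfold genk
    rw [div_div, ← pow_succ]
    congr 2
    ring
  rw [genB, Summable.tsum_eq_zero_add (summable_genk hM hb t), h0]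
  congr 1
  rw [genB, ← tsum_div_const]
  exact tsum_congr h

lemma genB_eq_BN {M : ℝ} (hM : ∀ t, |s t| ≤ M) (hb : 2 ≤ b) (k : ℕ) (t : ℝ) :
    genB s b t = genBN s b k t + genB s b ((b:ℝ)^k * t) / (b:ℝ)^k := by
  induction k with
  | zero => simp [genBN]
  | succ k ih =>
    rw [ih, genB_succ hM hb ((b:ℝ)^k * t)]
    have hbk : (b:ℝ)^k ≠ 0 := by positivity
    have hb0 : (b:ℝ) ≠ 0 := by positivity
    have hstep : genBN s b (k+1) t = genBN s b k t + genk s b k t := by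
      simp [genBN, Finset.sum_range_succ]
    have h1 : (b:ℝ) * ((b:ℝ)^k * t) = (b:ℝ)^(k+1) * t := by ring
    rw [hstep, h1]
    unfold genk
    field_simp
    ring

end Aux

section Affine

variable {s : ℝ → ℝ}

lemma s_affine_int {p : ℕ} (hp : 2 ≤ p) (hs : IsGenerator p s) (i : ℤ) :
    ∃ a q : ℝ, ∀ t ∈ Set.Icc ((i:ℝ)/p) (((i:ℝ)+1)/p), s t = a * t + q := by
  obtain ⟨-, hper, -, haff, -⟩ := hs
  have hp0 : (0:ℤ) < (p:ℤ) := by exact_mod_cast (by omega : 0 < p)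
  set z : ℤ := i / (p:ℤ) with hz
  set r : ℤ := i % (p:ℤ) with hr
  have hrr : 0 ≤ r := Int.emod_nonneg i (by omega)
  have hrlt : r < (p:ℤ) := Int.emod_lt_of_pos i hp0
  have hi : i = (p:ℤ) * z + r := by
    rw [hz, hr]; linarith [Int.emod_add_mul_ediv i (p:ℤ)]
  obtain ⟨a, q, h⟩ := haff r.toNat (by omega)
  refine ⟨a, q - a * z, fun t ht => ?_⟩
  have hpR : (0:ℝ) < (p:ℝ) := by exact_mod_cast (by omega : 0 < p)
  have h1 : s t = s (t - z) := by
    have := s_int_eq hper z (t - z)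
    rw [sub_add_cancel] at this
    exact this
  have hiR : (i : ℝ) = (p:ℝ) * (z:ℝ) + (r:ℝ) := by exact_mod_cast hi
  have e1 : (i:ℝ)/p = (z:ℝ) + (r:ℝ)/p := by rw [hiR]; field_simp
  have e2 : ((i:ℝ)+1)/p = (z:ℝ) + ((r:ℝ)+1)/p := by rw [hiR]; field_simp; ring
  have hcast : ((r.toNat : ℕ) : ℝ) = (r : ℝ) := by exact_mod_cast Int.toNat_of_nonneg hrr
  have ht' : t - (z:ℝ) ∈ Set.Icc ((r.toNat:ℝ)/p) (((r.toNat:ℝ)+1)/p) := by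
    rw [hcast]
    obtain ⟨hl, hu⟩ := ht
    rw [e1] at hl; rw [e2] at hu
    exact ⟨by linarith, by linarith⟩
  rw [h1, h (t - z) ht']
  ring

lemma s_affine_fine {p : ℕ} (hp : 2 ≤ p) (hs : IsGenerator p s) {N : ℕ} (hN : 1 ≤ N) (n : ℤ) :
    ∃ a q : ℝ, ∀ t ∈ Set.Icc ((n:ℝ)/((p:ℝ)*(N:ℝ))) (((n:ℝ)+1)/((p:ℝ)*(N:ℝ))), s t = a * t + q := by
  have hN0 : (0:ℤ) < (N:ℤ) := by exact_mod_cast hN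
  set i : ℤ := n / (N:ℤ) with hiz
  have h1 : (N:ℤ) * i ≤ n := by
    have := Int.emod_add_mul_ediv n (N:ℤ)
    have := Int.emod_nonneg n (by omega : (N:ℤ) ≠ 0)
    rw [hiz]; linarith
  have h2 : n + 1 ≤ (N:ℤ) * (i + 1) := by
    have e := Int.emod_add_mul_ediv n (N:ℤ)
    have hlt := Int.emod_lt_of_pos n hN0
    have : (N:ℤ) * (i+1) = (N:ℤ) * i + N := by ring
    rw [hiz] at *
    linarith
  obtain ⟨a, q, h⟩ := s_affine_int hp hs i
  have hpR : (0:ℝ) < (p:ℝ) := by exact_mod_cast (by omega : 0 < p)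
  have hNR : (0:ℝ) < (N:ℝ) := by exact_mod_cast (by omega : 0 < N)
  have h1R : (N:ℝ) * (i:ℝ) ≤ (n:ℝ) := by exact_mod_cast h1
  have h2R : (n:ℝ) + 1 ≤ (N:ℝ) * ((i:ℝ) + 1) := by exact_mod_cast h2
  refine ⟨a, q, fun t ht => h t ⟨?_, ?_⟩⟩
  · refine le_trans ?_ ht.1
    rw [div_le_div_iff₀ hpR (by positivity)]
    nlinarith
  · refine le_trans ht.2 ?_
    rw [div_le_div_iff₀ (by positivity) hpR]
    nlinarith

lemma genk_affine {p c : ℕ} (hp : 2 ≤ p) (hc : 1 ≤ c) (hs : IsGenerator p s)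
    {j k : ℕ} (hjk : j < k) (m : ℤ) :
    ∃ a q : ℝ, ∀ t ∈ Set.Icc ((m:ℝ)/((c*p : ℕ):ℝ)^k) (((m:ℝ)+1)/((c*p : ℕ):ℝ)^k),
      genk s (c*p) j t = a * t + q := by
  set b : ℕ := c * p with hbdef
  have hb2 : 2 ≤ b := by
    have : p ≤ c * p := Nat.le_mul_of_pos_left p (by omega)
    omega
  obtain ⟨K', hkK'⟩ : ∃ K', k = j + (K' + 1) := ⟨k - j - 1, by omega⟩
  set K : ℕ := K' + 1 with hK
  have hkK : k = j + K := hkK'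
  set N : ℕ := c * b^K' with hN
  have hNb : p * N = b^K := by
    rw [hN, hK, pow_succ, hbdef]
    ring
  have hN1 : 1 ≤ N := by
    have h1 : 0 < b ^ K' := Nat.pow_pos (by omega)
    have : 0 < N := by rw [hN]; positivity
    omega
  obtain ⟨a, q, h⟩ := s_affine_fine hp hs hN1 m
  have hbR : (0:ℝ) < (b:ℝ) := by exact_mod_cast (by omega : 0 < b)
  have hbj : (0:ℝ) < (b:ℝ)^j := by positivity
  have hpN : (p:ℝ) * (N:ℝ) = (b:ℝ)^K := by exact_mod_cast hNb
  have hpow : (b:ℝ)^k = (b:ℝ)^j * (b:ℝ)^K := by rw [hkK, pow_add]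
  refine ⟨a, q / (b:ℝ)^j, fun t ht => ?_⟩
  obtain ⟨hl, hu⟩ := ht
  have hl' : (m:ℝ)/((p:ℝ)*(N:ℝ)) ≤ (b:ℝ)^j * t := by
    rw [hpN]
    have := mul_le_mul_of_nonneg_left hl hbj.le
    calc (m:ℝ)/(b:ℝ)^K = (b:ℝ)^j * ((m:ℝ)/(b:ℝ)^k) := by rw [hpow]; field_simp
      _ ≤ (b:ℝ)^j * t := this
  have hu' : (b:ℝ)^j * t ≤ ((m:ℝ)+1)/((p:ℝ)*(N:ℝ)) := by
    rw [hpN]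
    have := mul_le_mul_of_nonneg_left hu hbj.le
    calc (b:ℝ)^j * t ≤ (b:ℝ)^j * (((m:ℝ)+1)/(b:ℝ)^k) := this
      _ = ((m:ℝ)+1)/(b:ℝ)^K := by rw [hpow]; field_simp
  have := h ((b:ℝ)^j * t) ⟨hl', hu'⟩
  rw [genk, this]
  field_simp

lemma genBN_affine {p c : ℕ} (hp : 2 ≤ p) (hc : 1 ≤ c) (hs : IsGenerator p s)
    (k : ℕ) (m : ℤ) :
    ∃ a q : ℝ, ∀ t ∈ Set.Icc ((m:ℝ)/((c*p : ℕ):ℝ)^k) (((m:ℝ)+1)/((c*p : ℕ):ℝ)^k),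
      genBN s (c*p) k t = a * t + q := by
  suffices h : ∀ n, n ≤ k → ∃ a q : ℝ,
      ∀ t ∈ Set.Icc ((m:ℝ)/((c*p : ℕ):ℝ)^k) (((m:ℝ)+1)/((c*p : ℕ):ℝ)^k),
        genBN s (c*p) n t = a * t + q from h k le_rfl
  intro n
  induction n with
  | zero => exact fun _ => ⟨0, 0, by simp [genBN]⟩
  | succ n ih =>
    intro hn
    obtain ⟨a, q, h1⟩ := ih (by omega)
    obtain ⟨a', q', h2⟩ := genk_affine hp hc hs (show n < k by omega) m
    refine ⟨a + a', q + q', fun t ht => ?_⟩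
    have e : genBN s (c*p) (n+1) t = genBN s (c*p) n t + genk s (c*p) n t := by
      simp [genBN, Finset.sum_range_succ]
    rw [e, h1 t ht, h2 t ht]
    ring

end Affine

lemma core {s : ℝ → ℝ} {p c : ℕ} (hp : 2 ≤ p) (hc : 1 ≤ c) (hs : IsGenerator p s)
    (hex : ∃ a q : ℝ, ∀ t ∈ Set.Ioo (0:ℝ) 1, genB s (c*p) t = a * t + q) : False := by
  obtain ⟨hcont, hper, h0, -, i₀, hi₀pos, hi₀lt, hi₀⟩ := hs
  obtain ⟨M, hM⟩ := exists_bound hcont hper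
  set b : ℕ := c * p with hbdef
  have hb : 2 ≤ b := by
    have : p ≤ c * p := Nat.le_mul_of_pos_left p (by omega)
    omega
  obtain ⟨a, q, h⟩ := hex
  have hBc : Continuous (genB s b) := genB_continuous hcont hM hb
  have heq : Set.EqOn (genB s b) (fun t => a * t + q) (Set.Icc 0 1) := by
    have := Set.EqOn.closure (fun t ht => h t ht) hBc (by continuity)
    rwa [closure_Ioo (by norm_num : (0:ℝ) ≠ 1)] at this
  have h00 : (0:ℝ) ∈ Set.Icc (0:ℝ) 1 := by norm_num
  have h11 : (1:ℝ) ∈ Set.Icc (0:ℝ) 1 := by norm_num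
  have hq : q = 0 := by
    have := heq h00
    rw [genB_zero h0] at this
    simpa using this.symm
  have hB1 : genB s b 1 = 0 := by
    have := genB_int (s := s) (b := b) hper 1 0
    simpa [genB_zero h0] using this
  have ha : a = 0 := by
    have := heq h11
    rw [hB1] at this
    simp only [mul_one] at this
    linarith
  have hBzero : ∀ t ∈ Set.Icc (0:ℝ) 1, genB s b t = 0 := fun t ht => by
    rw [heq ht, ha, hq]; ring
  have hpR : (0:ℝ) < (p:ℝ) := by exact_mod_cast (by omega : 0 < p)
  have ht0 : (i₀:ℝ)/p ∈ Set.Icc (0:ℝ) 1 := by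
    constructor
    · positivity
    · rw [div_le_one hpR]; exact_mod_cast hi₀lt.le
  have key := genB_succ hM hb ((i₀:ℝ)/p)
  have h1 : genB s b ((i₀:ℝ)/p) = 0 := hBzero _ ht0
  have h2 : genB s b ((b:ℝ) * ((i₀:ℝ)/p)) = 0 := by
    have e : (b:ℝ) * ((i₀:ℝ)/p) = (0:ℝ) + (((c*i₀ : ℕ) : ℤ) : ℝ) := by
      rw [hbdef]; push_cast; field_simp; ring
    rw [e, genB_int hper, genB_zero h0]
  rw [h1, h2] at key
  apply hi₀
  simpa using key.symm


/-- The generalized blancmange function `B(s,c)` (with `b = c·p`) is not affine on any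
nonempty open subinterval of `[0,1]`. -/
theorem stmt12 (p : ℕ) (hp : 2 ≤ p) (s : ℝ → ℝ) (hs : IsGenerator p s)
    (c : ℕ) (hc : 1 ≤ c) :
    ∀ α β : ℝ, 0 ≤ α → α < β → β ≤ 1 →
      ¬ ∃ a q : ℝ, ∀ t ∈ Set.Ioo α β, genB s (c * p) t = a * t + q := by
  intro α β hα hαβ hβ
  rintro ⟨a, q, haff⟩
  obtain ⟨M, hM⟩ := exists_bound hs.1 hs.2.1
  set b : ℕ := c * p with hbdef
  have hb : 2 ≤ b := by
    have : p ≤ c * p := Nat.le_mul_of_pos_left p (by omega)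
    omega
  have hbR : (1:ℝ) < (b:ℝ) := by exact_mod_cast (by omega : 1 < b)
  obtain ⟨k, hk⟩ := pow_unbounded_of_one_lt (2/(β-α)) hbR
  have hbk : (0:ℝ) < (b:ℝ)^k := by positivity
  have hbk0 : ((b:ℝ)^k : ℝ) ≠ 0 := ne_of_gt hbk
  set m : ℤ := ⌊α * (b:ℝ)^k⌋ + 1 with hm
  have hfl : ((⌊α * (b:ℝ)^k⌋ : ℤ) : ℝ) ≤ α * (b:ℝ)^k := Int.floor_le _
  have hfl2 : α * (b:ℝ)^k < ((⌊α * (b:ℝ)^k⌋ : ℤ) : ℝ) + 1 := Int.lt_floor_add_one _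
  have h2k : 2 + α*(b:ℝ)^k < β*(b:ℝ)^k := by
    have := (div_lt_iff₀ (show (0:ℝ) < β - α by linarith)).mp hk
    nlinarith
  have hmR : (m:ℝ) = ((⌊α * (b:ℝ)^k⌋ : ℤ) : ℝ) + 1 := by rw [hm]; push_cast; ring
  have hα' : α * (b:ℝ)^k < (m:ℝ) := by rw [hmR]; linarith
  have hβ' : (m:ℝ) + 1 < β * (b:ℝ)^k := by rw [hmR]; linarith
  obtain ⟨a', q', hBN⟩ := genBN_affine hp hc hs k m
  apply core hp hc hs
  refine ⟨a - a', (a - a') * m + (b:ℝ)^k * (q - q'), fun u hu => ?_⟩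
  obtain ⟨hu0, hu1⟩ := hu
  set t : ℝ := (u + m)/(b:ℝ)^k with htdef
  have hbt : (b:ℝ)^k * t = u + m := by rw [htdef]; field_simp
  have htmem : t ∈ Set.Ioo α β := by
    constructor
    · rw [htdef, lt_div_iff₀ hbk]; linarith
    · rw [htdef, div_lt_iff₀ hbk]; linarith
  have htcell : t ∈ Set.Icc ((m:ℝ)/(b:ℝ)^k) (((m:ℝ)+1)/(b:ℝ)^k) := by
    constructor
    · rw [htdef, div_le_div_iff₀ hbk hbk]; nlinarith
    · rw [htdef, div_le_div_iff₀ hbk hbk]; nlinarith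
  have hBt := haff t htmem
  have hBNt := hBN t htcell
  have hsplit := genB_eq_BN hM hb k t
  have hper' : genB s b (u + (m:ℝ)) = genB s b u := genB_int hs.2.1 m u
  rw [hbt, hper', hBt, hBNt] at hsplit
  -- hsplit : a*t+q = a'*t+q' + genB s b u / b^k
  have h6 : genB s b u = ((a*t + q) - (a'*t + q')) * (b:ℝ)^k := by
    rw [← div_eq_iff hbk0] at *
    linarith [hsplit]
  rw [h6]
  linear_combination (a - a') * hbt
end

section
/- Let p > 2 be an integer, s ∈ 𝒮_p and c ≥ 1 an integer. Then the generalized blancmange function B(s,c) is continuous on ℝ and nowhere differentiable: for every t₀ ∈ ℝ, B(s,c) is not differentiable at t₀. -/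
open Filter

namespace Stmt13Aux

/-- The slope of `s` on the `m`-th grid interval (extended to all integers `m`). -/
noncomputable def slp (p : ℕ) (s : ℝ → ℝ) (m : ℤ) : ℝ :=
  p * (s (((m : ℝ) + 1) / p) - s ((m : ℝ) / p))

/-- Sum of slopes along levels: the secant slope of `B` over a level-`n` interval. -/
noncomputable def T (p : ℕ) (s : ℝ → ℝ) (b : ℕ) (m : ℤ) (n : ℕ) : ℝ :=
  ∑ k ∈ Finset.range (n + 1), slp p s (m / (b : ℤ) ^ k)

lemma int_ediv_ediv (m : ℤ) {a b : ℤ} (ha : 0 < a) (hb : 0 < b) :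
    m / a / b = m / (a * b) := by
  have hab : 0 < a * b := mul_pos ha hb
  obtain ⟨q, r, hm, hr0, hr⟩ : ∃ q r, m = a * b * q + r ∧ 0 ≤ r ∧ r < a * b :=
    ⟨m / (a * b), m % (a * b), (Int.mul_ediv_add_emod m (a * b)).symm,
      Int.emod_nonneg m hab.ne', Int.emod_lt_of_pos m hab⟩
  subst hm
  have h1 : (a * b * q + r) / a = r / a + b * q := by
    rw [show a * b * q + r = r + (b * q) * a by ring, Int.add_mul_ediv_right _ _ ha.ne']
  have h3 : r / a / b = 0 := by
    refine Int.ediv_eq_zero_of_lt (Int.ediv_nonneg hr0 ha.le) ?_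
    rw [Int.ediv_lt_iff_lt_mul ha]
    linarith [mul_comm a b]
  have h2 : (r / a + b * q) / b = r / a / b + q := by
    rw [show r / a + b * q = r / a + q * b by ring, Int.add_mul_ediv_right _ _ hb.ne']
  have h4 : (a * b * q + r) / (a * b) = q := by
    rw [show a * b * q + r = r + q * (a * b) by ring, Int.add_mul_ediv_right _ _ hab.ne',
      Int.ediv_eq_zero_of_lt hr0 hr]
    ring
  rw [h1, h2, h3, h4]
  ring

section Periodic

variable {p : ℕ} {s : ℝ → ℝ}

lemma per_int (hper : ∀ t : ℝ, s (t + 1) = s t) (z : ℤ) (t : ℝ) : s (t + z) = s t := by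
  have H : Function.Periodic s 1 := hper
  have := (H.int_mul z) t
  simpa using this

lemma s_int_zero (hper : ∀ t : ℝ, s (t + 1) = s t) (h0 : s 0 = 0) (z : ℤ) :
    s (z : ℝ) = 0 := by
  have := per_int hper z 0
  simpa [h0] using this

lemma slp_add_mul (hp : 0 < p) (hper : ∀ t : ℝ, s (t + 1) = s t) (m z : ℤ) :
    slp p s (m + p * z) = slp p s m := by
  have hpR : (p : ℝ) ≠ 0 := by positivity
  unfold slp
  congr 2
  · have h1 : ((↑(m + p * z) : ℝ) + 1) / p = ((m : ℝ) + 1) / p + z := by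
      push_cast; field_simp; ring
    rw [h1, per_int hper]
  · have h1 : ((↑(m + p * z) : ℝ)) / p = (m : ℝ) / p + z := by
      push_cast; field_simp
    rw [h1, per_int hper]

/-- The key affinity computation: the increment of `s` over a subgrid interval. -/
lemma secant (hp : 0 < p)
    (haff : ∀ i : ℕ, i < p → ∃ a q : ℝ,
      ∀ t ∈ Set.Icc ((i : ℝ) / p) (((i : ℝ) + 1) / p), s t = a * t + q)
    (hper : ∀ t : ℝ, s (t + 1) = s t)
    {d : ℤ} (hd : 0 < d) (m : ℤ) :
    s (((m : ℝ) + 1) / (p * d)) - s ((m : ℝ) / (p * d)) = slp p s (m / d) / (p * d) := by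
  have hpz : (0 : ℤ) < (p : ℤ) := by exact_mod_cast hp
  have hpR : (0 : ℝ) < (p : ℝ) := by exact_mod_cast hp
  have hdR : (0 : ℝ) < (d : ℝ) := by exact_mod_cast hd
  set e : ℤ := m / d with he
  set r : ℤ := m % d with hrdef
  have hm : m = d * e + r := (Int.mul_ediv_add_emod m d).symm
  have hr0 : 0 ≤ r := Int.emod_nonneg m hd.ne'
  have hrd : r < d := Int.emod_lt_of_pos m hd
  set N : ℤ := e / (p : ℤ) with hN
  set i : ℤ := e % (p : ℤ) with hi
  have hie : e = p * N + i := (Int.mul_ediv_add_emod e (p : ℤ)).symm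
  have hi0 : 0 ≤ i := Int.emod_nonneg e hpz.ne'
  have hip : i < p := Int.emod_lt_of_pos e hpz
  obtain ⟨a, q0, hq⟩ := haff i.toNat (by omega)
  have hiR : ((i.toNat : ℕ) : ℝ) = (i : ℝ) := by exact_mod_cast Int.toNat_of_nonneg hi0
  rw [hiR] at hq
  -- the two evaluation points, shifted into the fundamental interval
  set x₁ : ℝ := ((d : ℝ) * i + r) / (p * d) with hx₁
  set x₂ : ℝ := ((d : ℝ) * i + r + 1) / (p * d) with hx₂
  have hrR0 : (0:ℝ) ≤ (r : ℝ) := by exact_mod_cast hr0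
  have hrRd : (r : ℝ) + 1 ≤ (d : ℝ) := by exact_mod_cast hrd
  have hmem₁ : x₁ ∈ Set.Icc ((i : ℝ) / p) (((i : ℝ) + 1) / p) := by
    constructor
    · rw [hx₁, div_le_div_iff₀ hpR (by positivity)]
      nlinarith
    · rw [hx₁, div_le_div_iff₀ (by positivity) hpR]
      nlinarith
  have hmem₂ : x₂ ∈ Set.Icc ((i : ℝ) / p) (((i : ℝ) + 1) / p) := by
    constructor
    · rw [hx₂, div_le_div_iff₀ hpR (by positivity)]
      nlinarith
    · rw [hx₂, div_le_div_iff₀ (by positivity) hpR]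
      nlinarith
  have hmemL : (i : ℝ) / p ∈ Set.Icc ((i : ℝ) / p) (((i : ℝ) + 1) / p) := by
    refine ⟨le_rfl, ?_⟩
    gcongr
    linarith
  have hmemR : ((i : ℝ) + 1) / p ∈ Set.Icc ((i : ℝ) / p) (((i : ℝ) + 1) / p) := by
    refine ⟨?_, le_rfl⟩
    gcongr
    linarith
  have hmZ : m = (p : ℤ) * d * N + d * i + r := by rw [hm, hie]; ring
  have hmR : (m : ℝ) = (p : ℝ) * d * N + d * i + r := by exact_mod_cast congrArg Int.cast hmZ
  have hx1eq : (m : ℝ) / (p * d) = x₁ + N := by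
    rw [hx₁, hmR]; field_simp; ring
  have hx2eq : ((m : ℝ) + 1) / (p * d) = x₂ + N := by
    rw [hx₂, hmR]; field_simp; ring
  have hsx1 : s ((m : ℝ) / (p * d)) = a * x₁ + q0 := by
    rw [hx1eq, per_int hper N x₁]; exact hq x₁ hmem₁
  have hsx2 : s (((m : ℝ) + 1) / (p * d)) = a * x₂ + q0 := by
    rw [hx2eq, per_int hper N x₂]; exact hq x₂ hmem₂
  have heR : (e : ℝ) = (p : ℝ) * N + i := by exact_mod_cast congrArg Int.cast hie
  have hse1 : s (((e : ℝ) + 1) / p) = a * (((i : ℝ) + 1) / p) + q0 := by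
    have h1 : ((e : ℝ) + 1) / p = ((i : ℝ) + 1) / p + N := by
      rw [heR]; field_simp; ring
    rw [h1, per_int hper N]; exact hq _ hmemR
  have hse0 : s ((e : ℝ) / p) = a * ((i : ℝ) / p) + q0 := by
    have h1 : (e : ℝ) / p = (i : ℝ) / p + N := by
      rw [heR]; field_simp; ring
    rw [h1, per_int hper N]; exact hq _ hmemL
  have hslp : slp p s (m / d) = a := by
    rw [← he]
    unfold slp
    rw [hse1, hse0]
    field_simp
    ring
  rw [hsx1, hsx2, hslp, hx₁, hx₂]
  field_simp
  ring

end Periodic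

section GenB

variable {p b c : ℕ} {s : ℝ → ℝ}

lemma genB_grid (hb : b = c * p) (hp : 0 < p) (hc : 0 < c)
    (hper : ∀ t : ℝ, s (t + 1) = s t) (h0 : s 0 = 0) (n : ℕ) (m : ℤ) :
    genB s b ((m : ℝ) / (p * (b : ℝ) ^ n)) =
      ∑ k ∈ Finset.range (n + 1), s ((m : ℝ) / (p * (b : ℝ) ^ (n - k))) / (b : ℝ) ^ k := by
  have hb0 : 0 < b := hb ▸ Nat.mul_pos hc hp
  have hbR : (0 : ℝ) < (b : ℝ) := by exact_mod_cast hb0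
  have hpR : (0 : ℝ) < (p : ℝ) := by exact_mod_cast hp
  unfold genB
  rw [tsum_eq_sum (s := Finset.range (n + 1)) ?_]
  · refine Finset.sum_congr rfl fun k hk => ?_
    have hk' : k ≤ n := Nat.lt_succ_iff.mp (Finset.mem_range.mp hk)
    unfold genk
    congr 2
    have hbn : (b : ℝ) ^ n = (b : ℝ) ^ k * (b : ℝ) ^ (n - k) := by
      rw [← pow_add]; congr 1; omega
    rw [hbn]
    field_simp
  · intro k hk
    have hk' : n + 1 ≤ k := by
      by_contra h
      exact hk (Finset.mem_range.mpr (by omega))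
    unfold genk
    have harg : (b : ℝ) ^ k * ((m : ℝ) / (p * (b : ℝ) ^ n)) =
        ((m * c * (b : ℤ) ^ (k - n - 1) : ℤ) : ℝ) := by
      have hbk : (b : ℝ) ^ k = (b : ℝ) ^ n * (b : ℝ) * (b : ℝ) ^ (k - n - 1) := by
        rw [← pow_succ, ← pow_add]; congr 1; omega
      have hbcp : (b : ℝ) = (c : ℝ) * (p : ℝ) := by exact_mod_cast congrArg Nat.cast hb
      push_cast
      rw [hbk, hbcp]
      field_simp
    rw [harg, s_int_zero hper h0, zero_div]

lemma genB_secant (hb : b = c * p) (hp : 0 < p) (hc : 0 < c)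
    (haff : ∀ i : ℕ, i < p → ∃ a q : ℝ,
      ∀ t ∈ Set.Icc ((i : ℝ) / p) (((i : ℝ) + 1) / p), s t = a * t + q)
    (hper : ∀ t : ℝ, s (t + 1) = s t) (h0 : s 0 = 0) (n : ℕ) (m : ℤ) :
    genB s b (((m : ℝ) + 1) / (p * (b : ℝ) ^ n)) - genB s b ((m : ℝ) / (p * (b : ℝ) ^ n)) =
      T p s b m n / (p * (b : ℝ) ^ n) := by
  have hb0 : 0 < b := hb ▸ Nat.mul_pos hc hp
  have hbR : (0 : ℝ) < (b : ℝ) := by exact_mod_cast hb0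
  have hpR : (0 : ℝ) < (p : ℝ) := by exact_mod_cast hp
  have e1 := genB_grid hb hp hc hper h0 n (m + 1)
  have e2 := genB_grid hb hp hc hper h0 n m
  have e1' : genB s b (((m : ℝ) + 1) / (p * (b : ℝ) ^ n)) =
      ∑ k ∈ Finset.range (n + 1), s (((m : ℝ) + 1) / (p * (b : ℝ) ^ (n - k))) / (b : ℝ) ^ k := by
    push_cast at e1
    exact e1
  rw [e1', e2, ← Finset.sum_sub_distrib]
  have hterm : ∀ k ∈ Finset.range (n + 1),
      s (((m : ℝ) + 1) / (p * (b : ℝ) ^ (n - k))) / (b : ℝ) ^ k -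
        s ((m : ℝ) / (p * (b : ℝ) ^ (n - k))) / (b : ℝ) ^ k =
      slp p s (m / (b : ℤ) ^ (n - k)) / (p * (b : ℝ) ^ n) := by
    intro k hk
    have hk' : k ≤ n := Nat.lt_succ_iff.mp (Finset.mem_range.mp hk)
    have hdz : (0 : ℤ) < (b : ℤ) ^ (n - k) := by positivity
    have hsec := secant hp haff hper hdz m
    have hcast : (((b : ℤ) ^ (n - k) : ℤ) : ℝ) = (b : ℝ) ^ (n - k) := by push_cast; ring
    rw [hcast] at hsec
    rw [div_sub_div_same, hsec]
    have hbn : (b : ℝ) ^ n = (b : ℝ) ^ (n - k) * (b : ℝ) ^ k := by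
      rw [← pow_add]; congr 1; omega
    rw [div_div, hbn, mul_assoc]
  rw [Finset.sum_congr rfl hterm, ← Finset.sum_div]
  congr 1
  unfold T
  have := Finset.sum_range_reflect (fun k => slp p s (m / (b : ℤ) ^ k)) (n + 1)
  simpa using this

lemma T_sub (hb0 : 0 < b) {m m' : ℤ} (h : m / (b : ℤ) = m' / (b : ℤ)) (n : ℕ) :
    T p s b m n - T p s b m' n = slp p s m - slp p s m' := by
  have hbz : (0 : ℤ) < (b : ℤ) := by exact_mod_cast hb0
  have key : ∀ mm : ℤ, T p s b mm n =
      slp p s mm + ∑ k ∈ Finset.range n, slp p s (mm / (b : ℤ) / (b : ℤ) ^ k) := by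
    intro mm
    unfold T
    rw [Finset.sum_range_succ', add_comm]
    congr 1
    · simp
    · refine Finset.sum_congr rfl fun k _ => ?_
      congr 1
      rw [int_ediv_ediv mm hbz (pow_pos hbz k), ← pow_succ']
  rw [key m, key m', h]
  ring

end GenB

/-- Pinching lemma: difference quotients over shrinking intervals around `t₀` converge to the
derivative. -/
lemma pinch {f : ℝ → ℝ} {L t₀ : ℝ} (hd : HasDerivAt f L t₀) {x y : ℕ → ℝ}
    (hx : ∀ n, x n ≤ t₀) (hy : ∀ n, t₀ ≤ y n) (hxy : ∀ n, x n < y n)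
    (hlen : Tendsto (fun n => y n - x n) atTop (nhds 0)) :
    Tendsto (fun n => (f (y n) - f (x n)) / (y n - x n)) atTop (nhds L) := by
  rw [Metric.tendsto_atTop]
  intro ε hε
  have hlo := (hasDerivAt_iff_isLittleO.mp hd).def (show (0 : ℝ) < ε / 3 by linarith)
  rw [Metric.eventually_nhds_iff] at hlo
  obtain ⟨δ, hδ, hδ'⟩ := hlo
  have h2 : ∀ᶠ n in atTop, y n - x n < δ := hlen.eventually_lt_const hδ
  obtain ⟨N, hN⟩ := eventually_atTop.mp h2
  refine ⟨N, fun n hn => ?_⟩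
  have hlt := hN n hn
  have hxt : dist (x n) t₀ < δ := by
    rw [Real.dist_eq, abs_of_nonpos (by linarith [hx n])]
    linarith [hy n, hx n]
  have hyt : dist (y n) t₀ < δ := by
    rw [Real.dist_eq, abs_of_nonneg (by linarith [hy n])]
    linarith [hx n, hy n]
  have hbx := hδ' hxt
  have hby := hδ' hyt
  simp only [Real.norm_eq_abs, smul_eq_mul] at hbx hby
  have hnum : |f (y n) - f (x n) - (y n - x n) * L| ≤ ε / 3 * (y n - x n) := by
    have hid : f (y n) - f (x n) - (y n - x n) * L =
        (f (y n) - f t₀ - (y n - t₀) * L) - (f (x n) - f t₀ - (x n - t₀) * L) := by ring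
    rw [hid]
    calc |(f (y n) - f t₀ - (y n - t₀) * L) - (f (x n) - f t₀ - (x n - t₀) * L)|
        ≤ |f (y n) - f t₀ - (y n - t₀) * L| + |f (x n) - f t₀ - (x n - t₀) * L| :=
          abs_sub _ _
      _ ≤ ε / 3 * |y n - t₀| + ε / 3 * |x n - t₀| := add_le_add hby hbx
      _ ≤ ε / 3 * (y n - x n) := by
          rw [abs_of_nonneg (by linarith [hy n]), abs_of_nonpos (by linarith [hx n])]
          nlinarith [hy n, hx n]
  have hpos : 0 < y n - x n := by linarith [hxy n]
  rw [Real.dist_eq]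
  have hqd : (f (y n) - f (x n)) / (y n - x n) - L =
      (f (y n) - f (x n) - (y n - x n) * L) / (y n - x n) := by
    field_simp
  rw [hqd, abs_div, abs_of_pos hpos]
  rw [div_lt_iff₀ hpos]
  calc |f (y n) - f (x n) - (y n - x n) * L| ≤ ε / 3 * (y n - x n) := hnum
    _ < ε * (y n - x n) := by nlinarith

end Stmt13Aux

open Stmt13Aux in
/-- For `p > 2`, the generalized blancmange function `B(s,c)` (with `b = c·p`) is continuous
and nowhere differentiable. -/
theorem stmt13 (p : ℕ) (hp : 2 < p) (s : ℝ → ℝ) (hs : IsGenerator p s)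
    (c : ℕ) (hc : 1 ≤ c) :
    Continuous (genB s (c * p)) ∧ ∀ t₀ : ℝ, ¬ DifferentiableAt ℝ (genB s (c * p)) t₀ := by
  obtain ⟨hcont, hper, h0, haff, i₀, hi₀0, hi₀p, hi₀⟩ := hs
  have hp0 : 0 < p := by omega
  have hc0 : 0 < c := hc
  set b := c * p with hb
  have hb0 : 0 < b := Nat.mul_pos hc0 hp0
  have hbp : p ≤ b := Nat.le_mul_of_pos_left p hc0
  have hb1 : 1 < b := by omega
  have hbR : (1 : ℝ) < (b : ℝ) := by exact_mod_cast hb1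
  have hbR0 : (0 : ℝ) < (b : ℝ) := by linarith
  have hpR : (0 : ℝ) < (p : ℝ) := by exact_mod_cast hp0
  -- a uniform bound for `s`
  obtain ⟨M, hM⟩ : ∃ M : ℝ, ∀ t : ℝ, |s t| ≤ M := by
    obtain ⟨C, hC⟩ := (isCompact_Icc (a := (0:ℝ)) (b := 1)).exists_bound_of_continuousOn
      hcont.continuousOn
    refine ⟨C, fun t => ?_⟩
    have hf : s t = s (Int.fract t) := by
      conv_lhs => rw [show t = Int.fract t + (⌊t⌋ : ℝ) by rw [Int.fract]; ring]
      exact per_int hper ⌊t⌋ _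
    rw [hf]
    have := hC (Int.fract t) ⟨Int.fract_nonneg t, (Int.fract_lt_one t).le⟩
    simpa [Real.norm_eq_abs] using this
  -- continuity
  have hcontB : Continuous (genB s b) := by
    apply continuous_tsum (u := fun k => M * ((b : ℝ)⁻¹) ^ k)
    · intro k
      exact (hcont.comp (continuous_const.mul continuous_id)).div_const _
    · exact (summable_geometric_of_lt_one (by positivity)
        (inv_lt_one_of_one_lt₀ hbR)).mul_left M
    · intro k t
      simp only [genk, Real.norm_eq_abs, abs_div, abs_of_pos (pow_pos hbR0 k)]
      calc |s ((b:ℝ) ^ k * t)| / (b:ℝ) ^ k ≤ M / (b:ℝ) ^ k := by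
            gcongr
            exact hM _
        _ = M * ((b : ℝ)⁻¹) ^ k := by rw [inv_pow]; ring
  refine ⟨hcontB, ?_⟩
  intro t₀ hdiff
  set L := deriv (genB s b) t₀ with hL
  have hd : HasDerivAt (genB s b) L t₀ := hdiff.hasDerivAt
  set P : ℕ → ℝ := fun n => (p : ℝ) * (b : ℝ) ^ n with hPdef
  have hP : ∀ n, (0 : ℝ) < P n := fun n => by rw [hPdef]; positivity
  set mm : ℕ → ℤ := fun n => ⌊t₀ * P n⌋ with hmmdef
  have hPinv : Tendsto (fun n => (P n)⁻¹) atTop (nhds 0) := by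
    have h1 : Tendsto (fun n : ℕ => ((b : ℝ)⁻¹) ^ n) atTop (nhds 0) :=
      tendsto_pow_atTop_nhds_zero_of_lt_one (by positivity) (inv_lt_one_of_one_lt₀ hbR)
    have h2 := h1.const_mul ((p : ℝ)⁻¹)
    rw [mul_zero] at h2
    refine h2.congr fun n => ?_
    rw [hPdef]
    simp only [mul_inv, inv_pow]
    try ring
  have hxle : ∀ n, ((mm n : ℤ) : ℝ) / P n ≤ t₀ := by
    intro n
    rw [div_le_iff₀ (hP n)]
    exact Int.floor_le _
  have hylt : ∀ n, t₀ < (((mm n : ℤ) : ℝ) + 1) / P n := by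
    intro n
    rw [lt_div_iff₀ (hP n)]
    exact Int.lt_floor_add_one _
  set R : ℤ → ℕ → ℝ := fun j n =>
    (genB s b (((mm n + j : ℤ) : ℝ) / P n) - genB s b (((mm n : ℤ) : ℝ) / P n)) * P n
    with hRdef
  -- limits of quotients over intervals to the right
  have hRpos : ∀ j : ℤ, 0 < j → Tendsto (R j) atTop (nhds ((j : ℝ) * L)) := by
    intro j hj
    have hjR : (0 : ℝ) < (j : ℝ) := by exact_mod_cast hj
    have hy : ∀ n, t₀ ≤ ((mm n + j : ℤ) : ℝ) / P n := by
      intro n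
      refine le_trans (hylt n).le ?_
      apply (div_le_div_iff_of_pos_right (hP n)).mpr
      push_cast
      have : (1 : ℝ) ≤ (j : ℝ) := by exact_mod_cast hj
      linarith
    have hxy : ∀ n, ((mm n : ℤ) : ℝ) / P n < ((mm n + j : ℤ) : ℝ) / P n := by
      intro n
      apply (div_lt_div_iff_of_pos_right (hP n)).mpr
      push_cast
      linarith
    have hlen : Tendsto (fun n => ((mm n + j : ℤ) : ℝ) / P n - ((mm n : ℤ) : ℝ) / P n)
        atTop (nhds 0) := by
      have h2 := hPinv.const_mul (j : ℝ)
      rw [mul_zero] at h2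
      refine h2.congr fun n => ?_
      have hPn := (hP n).ne'
      push_cast
      field_simp
      ring
    have hQ := pinch hd hxle hy hxy hlen
    refine (hQ.const_mul (j : ℝ)).congr fun n => ?_
    have hPn := (hP n).ne'
    have hdiff2 : ((mm n + j : ℤ) : ℝ) / P n - ((mm n : ℤ) : ℝ) / P n = (j : ℝ) / P n := by
      push_cast
      field_simp
      ring
    rw [hRdef, hdiff2]
    field_simp
  -- limits of quotients for all translates
  have hR : ∀ j : ℤ, Tendsto (R j) atTop (nhds ((j : ℝ) * L)) := by
    intro j
    rcases lt_trichotomy j 0 with hj | hj | hj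
    · have hjR : (j : ℝ) < 0 := by exact_mod_cast hj
      have h1 := hRpos 1 one_pos
      have h1j : (0 : ℝ) < 1 - (j : ℝ) := by linarith
      have hxle' : ∀ n, ((mm n + j : ℤ) : ℝ) / P n ≤ t₀ := by
        intro n
        refine le_trans ?_ (hxle n)
        apply (div_le_div_iff_of_pos_right (hP n)).mpr
        push_cast
        linarith
      have hyge' : ∀ n, t₀ ≤ ((mm n + 1 : ℤ) : ℝ) / P n := by
        intro n
        refine le_trans (hylt n).le (le_of_eq ?_)
        push_cast
        ring_nf
      have hxy' : ∀ n, ((mm n + j : ℤ) : ℝ) / P n < ((mm n + 1 : ℤ) : ℝ) / P n := by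
        intro n
        apply (div_lt_div_iff_of_pos_right (hP n)).mpr
        push_cast
        linarith
      have hlen' : Tendsto (fun n => ((mm n + 1 : ℤ) : ℝ) / P n - ((mm n + j : ℤ) : ℝ) / P n)
          atTop (nhds 0) := by
        have h2 := hPinv.const_mul ((1 : ℝ) - j)
        rw [mul_zero] at h2
        refine h2.congr fun n => ?_
        have hPn := (hP n).ne'
        push_cast
        field_simp
        ring
      have hQ := pinch hd hxle' hyge' hxy' hlen'
      have hlim := h1.sub (hQ.const_mul ((1 : ℝ) - (j : ℝ)))
      have hval : ((1 : ℤ) : ℝ) * L - (1 - (j : ℝ)) * L = (j : ℝ) * L := by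
        push_cast
        ring
      rw [hval] at hlim
      refine hlim.congr fun n => ?_
      have hPn := (hP n).ne'
      have hdiff2 : ((mm n + 1 : ℤ) : ℝ) / P n - ((mm n + j : ℤ) : ℝ) / P n
          = (1 - (j : ℝ)) / P n := by
        push_cast
        field_simp
        ring
      rw [hRdef, hdiff2]
      field_simp
      ring
    · subst hj
      have : R 0 = fun _ => 0 := by
        funext n
        rw [hRdef]
        simp
      rw [this]
      simp only [Int.cast_zero, zero_mul]
      exact tendsto_const_nhds
    · exact hRpos j hj
  -- limits of the level-n slope sums
  have hS : ∀ j : ℤ, Tendsto (fun n => T p s b (mm n + j) n) atTop (nhds L) := by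
    intro j
    have h1 := (hR (j + 1)).sub (hR j)
    have hval : ((j + 1 : ℤ) : ℝ) * L - (j : ℝ) * L = L := by push_cast; ring
    rw [hval] at h1
    refine h1.congr fun n => ?_
    have hPn := (hP n).ne'
    have hsec := genB_secant hb hp0 hc0 haff hper h0 n (mm n + j)
    have hPn' : (p : ℝ) * (b : ℝ) ^ n = P n := by rw [hPdef]
    rw [hPn'] at hsec
    have e1 : ((mm n + (j + 1) : ℤ) : ℝ) = ((mm n + j : ℤ) : ℝ) + 1 := by push_cast; ring
    rw [hRdef]
    simp only
    rw [show mm n + (j + 1) = (mm n + j) + 1 by ring]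
    have e2 : (((mm n + j) + 1 : ℤ) : ℝ) = ((mm n + j : ℤ) : ℝ) + 1 := by push_cast; ring
    rw [e2, sub_mul, sub_mul, sub_sub_sub_cancel_right, ← sub_mul, hsec]
    field_simp
  -- all slopes of `s` are equal
  have heqs : ∀ u v : ℤ, slp p s u = slp p s v := by
    intro u v
    have key : ∀ ε : ℝ, 0 < ε → |slp p s u - slp p s v| < ε := by
      intro ε hε
      have hev : ∀ᶠ n in atTop, ∀ j ∈ Finset.Icc (-(b : ℤ) + 1) ((b : ℤ) - 1),
          |T p s b (mm n + j) n - L| < ε / 2 := by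
        rw [Filter.eventually_all_finset]
        intro j _
        have h2 : ∀ᶠ n in atTop, dist (T p s b (mm n + j) n) L < ε / 2 :=
          (hS j) (Metric.ball_mem_nhds L (by linarith))
        filter_upwards [h2] with n hn
        rwa [Real.dist_eq] at hn
      obtain ⟨n, hn⟩ := hev.exists
      have hbz : (0 : ℤ) < (b : ℤ) := by exact_mod_cast hb0
      have hpz : (0 : ℤ) < (p : ℤ) := by exact_mod_cast hp0
      have hpb : (p : ℤ) ≤ (b : ℤ) := by exact_mod_cast hbp
      set r : ℤ := mm n % (b : ℤ) with hr
      have hr0 : 0 ≤ r := Int.emod_nonneg _ hbz.ne'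
      have hrb : r < b := Int.emod_lt_of_pos _ hbz
      have hq : (b : ℤ) * (mm n / b) + r = mm n := Int.mul_ediv_add_emod _ _
      have choose : ∀ w : ℤ, ∃ j : ℤ, j ∈ Finset.Icc (-(b : ℤ) + 1) ((b : ℤ) - 1) ∧
          (mm n + j) / (b : ℤ) = mm n / (b : ℤ) ∧ slp p s (mm n + j) = slp p s w := by
        intro w
        set v' : ℤ := (w - mm n + r) % (p : ℤ) with hv'
        have hv0 : 0 ≤ v' := Int.emod_nonneg _ hpz.ne'
        have hvp : v' < p := Int.emod_lt_of_pos _ hpz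
        refine ⟨-r + v', ?_, ?_, ?_⟩
        · simp only [Finset.mem_Icc]
          omega
        · have h4 : mm n + (-r + v') = v' + (b : ℤ) * (mm n / b) := by linarith [hq]
          rw [h4, Int.add_mul_ediv_left _ _ hbz.ne',
            Int.ediv_eq_zero_of_lt hv0 (by omega), zero_add]
        · have h5 : (p : ℤ) * ((w - mm n + r) / p) + v' = w - mm n + r :=
            Int.mul_ediv_add_emod _ _
          have h6 : (p : ℤ) * (-((w - mm n + r) / p)) = -((p : ℤ) * ((w - mm n + r) / p)) := by
            ring
          have hdvd : mm n + (-r + v') = w + (p : ℤ) * (-((w - mm n + r) / p)) := by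
            linarith [h5, h6, hq]
          rw [hdvd, slp_add_mul hp0 hper]
      obtain ⟨ju, hju, hju2, hju3⟩ := choose u
      obtain ⟨jv, hjv, hjv2, hjv3⟩ := choose v
      have hT := T_sub (p := p) (s := s) hb0 (hju2.trans hjv2.symm) n
      calc |slp p s u - slp p s v|
          = |T p s b (mm n + ju) n - T p s b (mm n + jv) n| := by rw [hT, hju3, hjv3]
        _ ≤ |T p s b (mm n + ju) n - L| + |T p s b (mm n + jv) n - L| := by
            refine le_trans (abs_sub_le _ L _) ?_
            rw [abs_sub_comm L]
        _ < ε / 2 + ε / 2 := add_lt_add (hn ju hju) (hn jv hjv)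
        _ = ε := by ring
    by_contra hne
    exact lt_irrefl _ (key _ (abs_pos.mpr (sub_ne_zero.mpr hne)))
  -- hence all slopes vanish
  have hallzero : ∀ w : ℤ, slp p s w = 0 := by
    have htel := Finset.sum_range_sub (fun i : ℕ => s ((i : ℝ) / p)) p
    have hp1 : s ((p : ℝ) / p) = 0 := by
      rw [div_self hpR.ne']
      have := hper 0
      rw [zero_add] at this
      rw [this, h0]
    have hz0 : s ((0 : ℕ) / (p : ℝ)) = 0 := by
      norm_num [h0]
    have hterm : ∀ i ∈ Finset.range p,
        s ((((i : ℕ) + 1 : ℕ) : ℝ) / p) - s ((i : ℝ) / p) = slp p s (i : ℤ) / p := by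
      intro i _
      unfold slp
      push_cast
      field_simp
    have hsum : ∑ i ∈ Finset.range p, slp p s (i : ℤ) / p = 0 := by
      rw [← Finset.sum_congr rfl hterm]
      rw [htel]
      rw [hp1]
      simpa using hz0
    have hconst : ∑ i ∈ Finset.range p, slp p s (i : ℤ) / p
        = (p : ℝ) * (slp p s 0 / p) := by
      rw [Finset.sum_congr rfl fun i _ => by rw [heqs (i : ℤ) 0]]
      rw [Finset.sum_const, Finset.card_range, nsmul_eq_mul]
    have h7 : slp p s 0 = 0 := by
      rw [hconst] at hsum
      field_simp at hsum
      exact hsum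
    intro w
    rw [heqs w 0, h7]
  -- then s vanishes at all grid points, contradiction
  have hflat : ∀ i : ℕ, i ≤ p → s ((i : ℝ) / p) = 0 := by
    intro i
    induction i with
    | zero =>
        intro _
        norm_num [h0]
    | succ k ih =>
        intro hk
        have h1 := hallzero (k : ℤ)
        unfold slp at h1
        push_cast at h1
        have h2 : s (((k : ℝ) + 1) / p) = s ((k : ℝ) / p) := by
          rcases mul_eq_zero.mp h1 with h | h
          · exact absurd h hpR.ne'
          · linarith
        push_cast
        rw [h2, ih (by omega)]
  exact hi₀ (hflat i₀ hi₀p.le)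
end

section
/- The family 𝓑 of generalized blancmange functions, restricted to [0,1], is dense in C⁰ with respect to the supremum norm: for every continuous function f : [0,1] → ℝ with f(0) = f(1) = 0 and every ε > 0, there exist an integer p ≥ 2, a generator s ∈ 𝒮_p and an integer c ≥ 1 such that sup_{t ∈ [0,1]} |f(t) − B(s,c)(t)| < ε. -/
open Filter

/-! ### The basic triangle wave -/

noncomputable def tri (t : ℝ) : ℝ := Real.arccos (Real.cos (2 * Real.pi * t)) / (2 * Real.pi)

lemma two_pi_pos : (0:ℝ) < 2 * Real.pi := by positivity

lemma tri_continuous : Continuous tri := by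
  unfold tri
  exact (Real.continuous_arccos.comp (by continuity)).div_const _

lemma tri_nonneg (t : ℝ) : 0 ≤ tri t :=
  div_nonneg (Real.arccos_nonneg _) (le_of_lt two_pi_pos)

lemma tri_add_int (t : ℝ) (k : ℤ) : tri (t + k) = tri t := by
  unfold tri
  congr 2
  rw [mul_add, show 2 * Real.pi * (k:ℝ) = (k:ℝ) * (2*Real.pi) by ring,
    Real.cos_add_int_mul_two_pi]

lemma tri_left {t : ℝ} (h0 : 0 ≤ t) (h : t ≤ 1/2) : tri t = t := by
  have hπ := Real.pi_pos
  unfold tri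
  rw [Real.arccos_cos (by positivity) (by nlinarith)]
  field_simp

lemma tri_right {t : ℝ} (h : 1/2 ≤ t) (h1 : t ≤ 1) : tri t = 1 - t := by
  have hπ := Real.pi_pos
  have hc : Real.cos (2*Real.pi*t) = Real.cos (2*Real.pi*(1-t)) := by
    rw [show 2*Real.pi*(1-t) = 2*Real.pi - 2*Real.pi*t by ring, Real.cos_two_pi_sub]
  unfold tri
  rw [hc, Real.arccos_cos (by nlinarith) (by nlinarith)]
  field_simp

/-! ### Tent functions -/

noncomputable def tent (p : ℕ) (t : ℝ) : ℝ := max 0 (1 - p * tri t)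

lemma tent_continuous (p : ℕ) : Continuous (tent p) :=
  continuous_const.max (continuous_const.sub (continuous_const.mul tri_continuous))

lemma tent_nonneg (p : ℕ) (t : ℝ) : 0 ≤ tent p t := le_max_left _ _

lemma tent_le_one (p : ℕ) (t : ℝ) : tent p t ≤ 1 := by
  apply max_le (by norm_num)
  nlinarith [tri_nonneg t, Nat.cast_nonneg (α := ℝ) p]

lemma tent_add_int (p : ℕ) (t : ℝ) (k : ℤ) : tent p (t + k) = tent p t := by
  unfold tent; rw [tri_add_int]

lemma tent_left {p : ℕ} (hp : 2 ≤ p) {t : ℝ} (h0 : 0 ≤ t) (h : t ≤ 1/(p:ℝ)) :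
    tent p t = 1 - p * t := by
  have hp0 : (0:ℝ) < p := by positivity
  have hp2 : (2:ℝ) ≤ p := by exact_mod_cast hp
  have ht2 : t ≤ 1/2 := by
    calc t ≤ 1/(p:ℝ) := h
    _ ≤ 1/2 := by
      apply div_le_div_of_nonneg_left (by norm_num) (by norm_num) hp2
  have hpt : (p:ℝ) * t ≤ 1 := by
    have h2 : (p:ℝ) * t ≤ (p:ℝ) * (1/(p:ℝ)) := by gcongr
    rwa [mul_one_div, div_self hp0.ne'] at h2
  rw [tent, tri_left h0 ht2, max_eq_right (by linarith)]

lemma tent_right {p : ℕ} (hp : 2 ≤ p) {t : ℝ} (h0 : ((p:ℝ)-1)/p ≤ t) (h : t ≤ 1) :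
    tent p t = p * t - ((p:ℝ) - 1) := by
  have hp0 : (0:ℝ) < p := by positivity
  have hp2 : (2:ℝ) ≤ p := by exact_mod_cast hp
  have key : (p:ℝ) * t ≥ p - 1 := by
    have := (div_le_iff₀ hp0).mp h0
    nlinarith
  have ht2 : 1/2 ≤ t := by nlinarith
  rw [tent, tri_right ht2 h, max_eq_right (by nlinarith)]
  ring

lemma tent_mid {p : ℕ} (hp : 2 ≤ p) {t : ℝ} (h0 : 1/(p:ℝ) ≤ t) (h : t ≤ ((p:ℝ)-1)/p) :
    tent p t = 0 := by
  have hp0 : (0:ℝ) < p := by positivity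
  have hp2 : (2:ℝ) ≤ p := by exact_mod_cast hp
  have ht0 : 0 ≤ t := le_trans (by positivity) h0
  have ht1 : t ≤ 1 := le_trans h (by rw [div_le_iff₀ hp0]; nlinarith)
  have hh : t * (p:ℝ) ≤ (p:ℝ) - 1 := by
    have := h
    rw [le_div_iff₀ hp0] at this
    exact this
  have htri : 1/(p:ℝ) ≤ tri t := by
    rcases le_total t (1/2) with hc | hc
    · rw [tri_left ht0 hc]; exact h0
    · rw [tri_right hc ht1, div_le_iff₀ hp0]
      nlinarith
  apply max_eq_left
  have := (div_le_iff₀ hp0).mp htri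
  nlinarith

/-- tent at grid points. -/
lemma tent_grid {p : ℕ} (hp : 2 ≤ p) (m : ℤ) :
    tent p ((m:ℝ)/p) = if (p:ℤ) ∣ m then 1 else 0 := by
  have hp0 : (0:ℝ) < p := by positivity
  have hpz : (0:ℤ) < p := by positivity
  set r := m % (p:ℤ) with hr
  set k := m / (p:ℤ) with hk
  have hm : (p:ℤ) * k + r = m := Int.mul_ediv_add_emod m p
  have hr0 : 0 ≤ r := Int.emod_nonneg m (by omega)
  have hrp : r < p := Int.emod_lt_of_pos m hpz
  have hshift : (m:ℝ)/p = (r:ℝ)/p + (k:ℤ) := by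
    field_simp
    push_cast [← hm]
    ring
  rw [hshift, tent_add_int]
  have hdvd : (p:ℤ) ∣ m ↔ r = 0 := by rw [hr, Int.dvd_iff_emod_eq_zero]
  by_cases h : r = 0
  · simp only [hdvd, h, if_pos]
    norm_num
    rw [tent_left hp le_rfl (by positivity)]
    ring
  · rw [if_neg (by rw [hdvd]; exact h)]
    have h1 : (1:ℝ) ≤ (r:ℝ) := by exact_mod_cast (by omega : (1:ℤ) ≤ r)
    have h2 : (r:ℝ) ≤ (p:ℝ) - 1 := by
      have hh : r ≤ (p:ℤ) - 1 := by omega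
      have : (r:ℝ) ≤ ((p:ℤ):ℝ) - 1 := by exact_mod_cast hh
      simpa using this
    exact tent_mid hp (by gcongr) (by rw [div_le_div_iff₀ (by positivity) (by positivity)]; nlinarith)

/-- tent is affine on every grid interval. -/
lemma tent_affine {p : ℕ} (hp : 2 ≤ p) (m : ℤ) :
    ∃ a q : ℝ, ∀ u ∈ Set.Icc ((m:ℝ)/p) (((m:ℝ)+1)/p), tent p u = a * u + q := by
  have hp0 : (0:ℝ) < p := by positivity
  have hpz : (0:ℤ) < p := by positivity
  set r := m % (p:ℤ) with hr
  set k := m / (p:ℤ) with hk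
  have hm : (p:ℤ) * k + r = m := Int.mul_ediv_add_emod m p
  have hr0 : 0 ≤ r := Int.emod_nonneg m (by omega)
  have hrp : r < p := Int.emod_lt_of_pos m hpz
  have hmr : (m:ℝ) = (p:ℝ) * (k:ℝ) + (r:ℝ) := by push_cast [← hm]; ring
  have key : ∀ u ∈ Set.Icc ((m:ℝ)/p) (((m:ℝ)+1)/p),
      tent p u = tent p (u - k) ∧ (r:ℝ)/p ≤ u - k ∧ u - k ≤ ((r:ℝ)+1)/p := by
    intro u hu
    refine ⟨?_, ?_, ?_⟩
    · rw [show u - (k:ℝ) = u + ((-k : ℤ) : ℝ) by push_cast; ring, tent_add_int]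
    · rw [div_le_iff₀ hp0]
      have := hu.1
      rw [div_le_iff₀ hp0] at this
      nlinarith [this, hmr]
    · rw [le_div_iff₀ hp0]
      have := hu.2
      rw [le_div_iff₀ hp0] at this
      nlinarith [this, hmr]
  by_cases h0 : r = 0
  · refine ⟨-(p:ℝ), 1 + p * k, fun u hu => ?_⟩
    obtain ⟨he, hl, hr'⟩ := key u hu
    rw [he, tent_left hp (by simpa [h0] using hl) (by simpa [h0] using hr')]
    ring
  · by_cases h1 : r = (p:ℤ) - 1
    · refine ⟨(p:ℝ), -((p:ℝ) * k + p - 1), fun u hu => ?_⟩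
      obtain ⟨he, hl, hr'⟩ := key u hu
      have hrr : (r:ℝ) = (p:ℝ) - 1 := by rw [h1]; push_cast; ring
      have hl' : ((p:ℝ)-1)/p ≤ u - k := by rw [← hrr]; exact hl
      have hr'' : u - k ≤ 1 := by
        have he1 : ((r:ℝ)+1)/p = 1 := by rw [hrr]; field_simp; ring
        rw [← he1]; exact hr'
      rw [he, tent_right hp hl' hr'']
      ring
    · refine ⟨0, 0, fun u hu => ?_⟩
      obtain ⟨he, hl, hr'⟩ := key u hu
      have hge : 1/(p:ℝ) ≤ u - k := by
        refine le_trans ?_ hl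
        gcongr
        exact_mod_cast (by omega : (1:ℤ) ≤ r)
      have hle : u - k ≤ ((p:ℝ)-1)/p := by
        refine le_trans hr' ?_
        gcongr
        have : (r:ℤ) + 1 ≤ (p:ℤ) - 1 := by omega
        have h2 : ((r:ℝ)+1) ≤ ((p:ℤ):ℝ) - 1 := by exact_mod_cast this
        simpa using h2
      rw [he, tent_mid hp hge hle]
      ring

/-! ### Piecewise linear interpolation -/

noncomputable def pls (p : ℕ) (v : ℕ → ℝ) (t : ℝ) : ℝ :=
  ∑ j ∈ Finset.range p, v j * tent p (t - j/p)

lemma pls_continuous (p : ℕ) (v : ℕ → ℝ) : Continuous (pls p v) := by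
  apply continuous_finset_sum
  intro j _
  exact continuous_const.mul ((tent_continuous p).comp (continuous_id.sub continuous_const))

lemma pls_periodic (p : ℕ) (v : ℕ → ℝ) (t : ℝ) : pls p v (t + 1) = pls p v t := by
  unfold pls
  refine Finset.sum_congr rfl fun j _ => ?_
  congr 1
  rw [show t + 1 - (j:ℝ)/p = (t - j/p) + ((1:ℤ):ℝ) by push_cast; ring, tent_add_int]

lemma pls_grid {p : ℕ} (hp : 2 ≤ p) (v : ℕ → ℝ) {i : ℕ} (hi : i < p) :
    pls p v ((i:ℝ)/p) = v i := by
  have hp0 : (0:ℝ) < p := by positivity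
  unfold pls
  rw [Finset.sum_eq_single i]
  · have : (i:ℝ)/p - (i:ℝ)/p = ((0:ℤ):ℝ)/p := by push_cast; ring
    rw [this, tent_grid hp, if_pos (dvd_zero _), mul_one]
  · intro j hj hne
    have : (i:ℝ)/p - (j:ℝ)/p = (((i:ℤ) - j : ℤ):ℝ)/p := by push_cast; ring
    rw [this, tent_grid hp, if_neg, mul_zero]
    intro hdvd
    have hjp : j < p := Finset.mem_range.mp hj
    have hd2 : p ∣ ((i:ℤ) - j).natAbs := Int.natAbs_dvd_natAbs.mpr (by simpa using hdvd)
    have := Nat.le_of_dvd (by omega) hd2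
    omega
  · intro h
    exact absurd (Finset.mem_range.mpr hi) h

lemma pls_affine {p : ℕ} (hp : 2 ≤ p) (v : ℕ → ℝ) (i : ℕ) :
    ∃ a q : ℝ, ∀ t ∈ Set.Icc ((i:ℝ)/p) (((i:ℝ)+1)/p), pls p v t = a * t + q := by
  have hp0 : (0:ℝ) < p := by positivity
  choose A Q hAQ using fun j : ℕ => tent_affine hp ((i:ℤ) - j)
  refine ⟨∑ j ∈ Finset.range p, v j * A j,
    ∑ j ∈ Finset.range p, v j * (Q j - A j * (j/p)), fun t ht => ?_⟩
  unfold pls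
  rw [Finset.sum_mul, ← Finset.sum_add_distrib]
  refine Finset.sum_congr rfl fun j _ => ?_
  have hmem : t - (j:ℝ)/p ∈ Set.Icc ((((i:ℤ) - j : ℤ):ℝ)/p) (((((i:ℤ) - j : ℤ):ℝ)+1)/p) := by
    constructor
    · have he : (((i:ℤ) - j : ℤ):ℝ)/p = (i:ℝ)/p - (j:ℝ)/p := by push_cast; ring
      rw [he]
      exact sub_le_sub_right ht.1 _
    · have he : ((((i:ℤ) - j : ℤ):ℝ)+1)/p = ((i:ℝ)+1)/p - (j:ℝ)/p := by push_cast; ring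
      rw [he]
      exact sub_le_sub_right ht.2 _
  rw [hAQ j _ hmem]
  ring

lemma pls_bound (p : ℕ) (v : ℕ → ℝ) (t : ℝ) :
    |pls p v t| ≤ ∑ j ∈ Finset.range p, |v j| := by
  refine le_trans (Finset.abs_sum_le_sum_abs _ _) (Finset.sum_le_sum fun j _ => ?_)
  rw [abs_mul]
  calc |v j| * |tent p (t - j/p)| ≤ |v j| * 1 := by
        apply mul_le_mul_of_nonneg_left _ (abs_nonneg _)
        rw [abs_of_nonneg (tent_nonneg _ _)]
        exact tent_le_one _ _
  _ = |v j| := mul_one _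

/-! ### Tail bound for the blancmange sum -/

set_option maxHeartbeats 1000000 in
lemma tail_bound (s : ℝ → ℝ) (M : ℝ) (hM : ∀ x, |s x| ≤ M) (b : ℕ) (hb : 2 ≤ b) (t : ℝ) :
    |genB s b t - s t| ≤ M / ((b:ℝ) - 1) := by
  have hb1 : (1:ℝ) < b := by exact_mod_cast hb
  have hb0 : (0:ℝ) < b := by linarith
  have hM0 : 0 ≤ M := le_trans (abs_nonneg _) (hM 0)
  have hrlt : (b:ℝ)⁻¹ < 1 := by
    exact inv_lt_one_of_one_lt₀ hb1
  have hr0 : (0:ℝ) ≤ (b:ℝ)⁻¹ := by positivity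
  have hbound : ∀ k, ‖genk s b k t‖ ≤ M * ((b:ℝ)⁻¹)^k := by
    intro k
    have hbk : (0:ℝ) < (b:ℝ)^k := by positivity
    rw [genk, Real.norm_eq_abs, abs_div, abs_of_pos hbk, div_le_iff₀ hbk]
    calc |s ((b:ℝ)^k * t)| ≤ M := hM _
    _ = M * ((b:ℝ)⁻¹)^k * (b:ℝ)^k := by
        rw [mul_assoc, ← mul_pow]
        field_simp
        simp
  have hgsum : Summable (fun k : ℕ => M * ((b:ℝ)⁻¹)^k) :=
    (summable_geometric_of_lt_one hr0 hrlt).mul_left M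
  have hsum : Summable (fun k => genk s b k t) := Summable.of_norm_bounded hgsum hbound
  rw [genB, hsum.tsum_eq_zero_add]
  have h0 : genk s b 0 t = s t := by simp [genk]
  rw [h0, add_sub_cancel_left]
  have hsum' : Summable (fun k => genk s b (k+1) t) := by
    exact (summable_nat_add_iff 1).mpr hsum
  have hnorm : Summable (fun k => ‖genk s b (k+1) t‖) := by
    apply Summable.of_nonneg_of_le (fun k => norm_nonneg _) (fun k => hbound (k+1))
    exact (summable_nat_add_iff 1).mpr hgsum
  calc |∑' k, genk s b (k+1) t| ≤ ∑' k, ‖genk s b (k+1) t‖ := norm_tsum_le_tsum_norm hnorm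
  _ ≤ ∑' k : ℕ, M * ((b:ℝ)⁻¹)^(k+1) := by
      apply Summable.tsum_le_tsum (fun k => hbound (k+1)) hnorm
      exact (summable_nat_add_iff 1).mpr hgsum
  _ = M * (b:ℝ)⁻¹ * ∑' k : ℕ, ((b:ℝ)⁻¹)^k := by
      rw [← tsum_mul_left]
      congr 1
      funext k
      ring
  _ = M * (b:ℝ)⁻¹ * (1 - (b:ℝ)⁻¹)⁻¹ := by rw [tsum_geometric_of_lt_one hr0 hrlt]
  _ = M / ((b:ℝ) - 1) := by
      have h1 : (b:ℝ) ≠ 0 := hb0.ne'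
      have h2 : (b:ℝ) - 1 ≠ 0 := by linarith
      field_simp

set_option maxHeartbeats 1000000 in
/-- The family `𝓑` of generalized blancmange functions is dense, for the supremum norm, in
the space of continuous functions `f : [0,1] → ℝ` with `f 0 = f 1 = 0`. -/
theorem stmt16 (f : ℝ → ℝ) (hf : ContinuousOn f (Set.Icc (0 : ℝ) 1))
    (hf0 : f 0 = 0) (hf1 : f 1 = 0) (ε : ℝ) (hε : 0 < ε) :
    ∃ (p : ℕ) (s : ℝ → ℝ) (c : ℕ), 2 ≤ p ∧ IsGenerator p s ∧ 1 ≤ c ∧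
      ∀ t ∈ Set.Icc (0 : ℝ) 1, |f t - genB s (c * p) t| < ε := by
  have huc : UniformContinuousOn f (Set.Icc 0 1) :=
    isCompact_Icc.uniformContinuousOn_of_continuous hf
  obtain ⟨δ, hδ0, hδ⟩ := Metric.uniformContinuousOn_iff.mp huc (ε/4) (by positivity)
  set p : ℕ := max 2 (⌈1/δ⌉₊ + 1) with hpdef
  have hp : 2 ≤ p := le_max_left _ _
  have hp0 : (0:ℝ) < p := by positivity
  have hp2R : (2:ℝ) ≤ p := by exact_mod_cast hp
  have hp1R : 1/(p:ℝ) < δ := by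
    have h1 : (1/δ : ℝ) < ((⌈1/δ⌉₊ + 1 : ℕ) : ℝ) := by
      push_cast
      exact lt_of_le_of_lt (Nat.le_ceil _) (by linarith)
    have h2 : (1/δ:ℝ) < p := by
      refine lt_of_lt_of_le h1 ?_
      exact_mod_cast le_max_right 2 (⌈1/δ⌉₊+1)
    rw [div_lt_iff₀ hp0]
    rw [div_lt_iff₀ hδ0] at h2
    nlinarith
  set v : ℕ → ℝ := fun j =>
    if j = 1 then (if f (1/(p:ℝ)) = 0 then ε/4 else f (1/(p:ℝ))) else f ((j:ℝ)/(p:ℝ)) with hv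
  have hv0 : v 0 = 0 := by simp [hv, hf0]
  have hv1ne : v 1 ≠ 0 := by
    simp only [hv, if_pos rfl]
    split
    · positivity
    · assumption
  have hvapprox : ∀ j : ℕ, |v j - f ((j:ℝ)/p)| ≤ ε/4 := by
    intro j
    by_cases hj : j = 1
    · subst hj
      simp only [hv, if_pos rfl, Nat.cast_one]
      split
      · rename_i h
        rw [h, sub_zero, abs_of_pos (by positivity : (0:ℝ) < ε/4)]
      · simp only [sub_self, abs_zero]
        positivity
    · simp [hv, hj]
      positivity
  set s : ℝ → ℝ := pls p v with hs
  set M : ℝ := ∑ j ∈ Finset.range p, |v j| with hMdef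
  have hMb : ∀ x, |s x| ≤ M := fun x => pls_bound p v x
  have hM0 : 0 ≤ M := le_trans (abs_nonneg _) (hMb 0)
  set c : ℕ := ⌈3*M/ε⌉₊ + 1 with hc
  have hc1 : 1 ≤ c := by omega
  have hb2 : 2 ≤ c * p := le_trans hp (Nat.le_mul_of_pos_left p (by omega))
  have hcR : 3*M/ε + 1 ≤ (c:ℝ) := by
    have h1 : (3*M/ε : ℝ) ≤ ⌈3*M/ε⌉₊ := Nat.le_ceil _
    have h2 : ((⌈3*M/ε⌉₊ : ℕ):ℝ) + 1 = (c:ℝ) := by rw [hc]; push_cast; ring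
    linarith
  have hbR : 3*M/ε + 2 ≤ ((c*p : ℕ):ℝ) := by
    have h2 : ((c*p:ℕ):ℝ) = (c:ℝ)*(p:ℝ) := by push_cast; ring
    have hc0 : (1:ℝ) ≤ (c:ℝ) := by exact_mod_cast hc1
    have hDnn : 0 ≤ 3*M/ε := by positivity
    rw [h2]
    nlinarith
  have htail : ∀ t : ℝ, |genB s (c*p) t - s t| < ε/3 := by
    intro t
    refine lt_of_le_of_lt (tail_bound s M hMb (c*p) hb2 t) ?_
    have hD : 3*M/ε*ε = 3*M := div_mul_cancel₀ _ hε.ne'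
    have hDnn : 0 ≤ 3*M/ε := by positivity
    have hb1 : (0:ℝ) < ((c*p:ℕ):ℝ) - 1 := by linarith
    rw [div_lt_iff₀ hb1]
    nlinarith
  refine ⟨p, s, c, hp, ?_, hc1, ?_⟩
  · refine ⟨pls_continuous p v, pls_periodic p v, ?_, ?_, 1, one_pos, by omega, ?_⟩
    · have h00 := pls_grid hp v (show 0 < p by omega)
      simpa [hv0] using h00
    · intro i _
      exact pls_affine hp v i
    · have h11 := pls_grid hp v (show 1 < p by omega)
      rw [hs, h11]
      exact hv1ne
  · intro t ht
    obtain ⟨ht0, ht1⟩ := ht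
    -- locate t in a grid interval
    set i : ℕ := min (p-1) ⌊(p:ℝ)*t⌋₊ with hi
    have hip : i < p := lt_of_le_of_lt (min_le_left _ _) (by omega)
    have hti : (i:ℝ)/p ≤ t := by
      have h1 : (i:ℝ) ≤ (⌊(p:ℝ)*t⌋₊:ℝ) := by exact_mod_cast min_le_right (p-1) _
      have h2 : ((⌊(p:ℝ)*t⌋₊:ℕ):ℝ) ≤ (p:ℝ)*t := Nat.floor_le (by positivity)
      rw [div_le_iff₀ hp0]
      nlinarith
    have hti2 : t ≤ ((i:ℝ)+1)/p := by
      rw [le_div_iff₀ hp0]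
      rcases le_or_gt (⌊(p:ℝ)*t⌋₊) (p-1) with hcase | hcase
      · have hieq : i = ⌊(p:ℝ)*t⌋₊ := min_eq_right hcase
        have h3 : (p:ℝ)*t < (⌊(p:ℝ)*t⌋₊:ℝ) + 1 := Nat.lt_floor_add_one _
        rw [hieq]
        nlinarith
      · have hieq : i = p - 1 := min_eq_left (by omega)
        have h4 : ((i:ℝ)+1) = (p:ℝ) := by
          rw [hieq]
          have : ((p-1:ℕ):ℝ) = (p:ℝ) - 1 := by
            have : (1:ℕ) ≤ p := by omega
            push_cast [Nat.cast_sub this]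
            ring
          rw [this]; ring
        rw [h4]
        nlinarith
    obtain ⟨a, q, haff⟩ := pls_affine hp v i
    set lam : ℝ := (p:ℝ)*t - i with hlam
    have hlam0 : 0 ≤ lam := by
      rw [hlam]
      rw [div_le_iff₀ hp0] at hti
      nlinarith
    have hlam1 : lam ≤ 1 := by
      rw [hlam]
      rw [le_div_iff₀ hp0] at hti2
      nlinarith
    have hL : s ((i:ℝ)/p) = v i := pls_grid hp v hip
    have hmemL : (i:ℝ)/p ∈ Set.Icc ((i:ℝ)/p) (((i:ℝ)+1)/p) := ⟨le_rfl, by gcongr; linarith⟩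
    have hmemR : ((i:ℝ)+1)/p ∈ Set.Icc ((i:ℝ)/p) (((i:ℝ)+1)/p) := ⟨by gcongr; linarith, le_rfl⟩
    have hconv : s t = (1 - lam) * s ((i:ℝ)/p) + lam * s (((i:ℝ)+1)/p) := by
      have hc3 : (1 - lam) * ((i:ℝ)/p) + lam * (((i:ℝ)+1)/p) = t := by
        rw [hlam]; field_simp; ring
      rw [hs, haff t ⟨hti, hti2⟩, haff _ hmemL, haff _ hmemR, ← hc3]
      ring
    -- distances to the two grid points
    have hnear : ∀ j : ℕ, j ≤ p → |t - (j:ℝ)/p| ≤ 1/p → |f t - f ((j:ℝ)/p)| < ε/4 := by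
      intro j hj hjnear
      have hmem : (j:ℝ)/p ∈ Set.Icc (0:ℝ) 1 := by
        constructor
        · positivity
        · rw [div_le_one hp0]; exact_mod_cast hj
      have := hδ t ⟨ht0, ht1⟩ _ hmem (by rw [Real.dist_eq]; linarith)
      rwa [Real.dist_eq] at this
    have hdc1 : (i:ℝ)/p*p = (i:ℝ) := div_mul_cancel₀ _ hp0.ne'
    have hdc2 : ((i:ℝ)+1)/p*p = (i:ℝ)+1 := div_mul_cancel₀ _ hp0.ne'
    have hd1 : |t - (i:ℝ)/p| ≤ 1/p := by
      rw [abs_of_nonneg (by linarith)]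
      rw [le_div_iff₀ hp0]
      rw [le_div_iff₀ hp0] at hti2
      rw [div_le_iff₀ hp0] at hti
      nlinarith [hdc1]
    have hd2 : |t - ((i:ℝ)+1)/p| ≤ 1/p := by
      rw [abs_of_nonpos (by linarith [hti2])]
      rw [le_div_iff₀ hp0]
      rw [le_div_iff₀ hp0] at hti2
      rw [div_le_iff₀ hp0] at hti
      nlinarith [hdc2]
    -- endpoint estimates
    have hEL : |f t - s ((i:ℝ)/p)| ≤ ε/2 := by
      rw [hL]
      calc |f t - v i| ≤ |f t - f ((i:ℝ)/p)| + |f ((i:ℝ)/p) - v i| := abs_sub_le _ _ _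
      _ ≤ ε/4 + ε/4 := add_le_add (le_of_lt (hnear i (le_of_lt hip) hd1))
            (by rw [abs_sub_comm]; exact hvapprox i)
      _ = ε/2 := by ring
    have hfR : |f (((i:ℝ)+1)/p) - s (((i:ℝ)+1)/p)| ≤ ε/4 := by
      by_cases hc2 : i + 1 = p
      · have h4 : ((i:ℝ)+1)/p = 1 := by
          have : ((i:ℝ)+1) = (p:ℝ) := by exact_mod_cast congrArg (Nat.cast : ℕ → ℝ) hc2
          rw [this]; field_simp
        have hs1 : s (((i:ℝ)+1)/p) = 0 := by
          rw [h4, show (1:ℝ) = 0 + 1 by ring, hs, pls_periodic]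
          have h00 := pls_grid hp v (show 0 < p by omega)
          simpa [hv0] using h00
        rw [hs1, h4, hf1]
        simp
        positivity
      · have hcast : ((i:ℝ)+1) = ((i+1:ℕ):ℝ) := by push_cast; ring
        have hsR : s (((i:ℝ)+1)/p) = v (i+1) := by
          rw [hcast]; exact pls_grid hp v (by omega)
        rw [hsR, abs_sub_comm, hcast]
        exact hvapprox (i+1)
    have hER : |f t - s (((i:ℝ)+1)/p)| ≤ ε/2 := by
      have hn : |f t - f (((i:ℝ)+1)/p)| < ε/4 := by
        have hcast : ((i:ℝ)+1) = ((i+1:ℕ):ℝ) := by push_cast; ring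
        rw [hcast]
        rw [hcast] at hd2
        exact hnear (i+1) (by omega) hd2
      calc |f t - s (((i:ℝ)+1)/p)|
          ≤ |f t - f (((i:ℝ)+1)/p)| + |f (((i:ℝ)+1)/p) - s (((i:ℝ)+1)/p)| := abs_sub_le _ _ _
      _ ≤ ε/4 + ε/4 := add_le_add (le_of_lt hn) hfR
      _ = ε/2 := by ring
    have hclose : |f t - s t| ≤ ε/2 := by
      have hsplit : f t - s t
          = (1-lam) * (f t - s ((i:ℝ)/p)) + lam * (f t - s (((i:ℝ)+1)/p)) := by
        rw [hconv]; ring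
      rw [hsplit]
      calc |(1-lam) * (f t - s ((i:ℝ)/p)) + lam * (f t - s (((i:ℝ)+1)/p))|
          ≤ (1-lam) * |f t - s ((i:ℝ)/p)| + lam * |f t - s (((i:ℝ)+1)/p)| := by
            refine le_trans (abs_add_le _ _) ?_
            rw [abs_mul, abs_mul, abs_of_nonneg (by linarith : (0:ℝ) ≤ 1 - lam),
              abs_of_nonneg hlam0]
      _ ≤ (1-lam) * (ε/2) + lam * (ε/2) :=
            add_le_add (mul_le_mul_of_nonneg_left hEL (by linarith))
              (mul_le_mul_of_nonneg_left hER hlam0)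
      _ = ε/2 := by ring
    calc |f t - genB s (c*p) t|
        ≤ |f t - s t| + |s t - genB s (c*p) t| := abs_sub_le _ _ _
    _ = |f t - s t| + |genB s (c*p) t - s t| := by rw [abs_sub_comm (s t)]
    _ < ε/2 + ε/3 := add_lt_add_of_le_of_lt hclose (htail t)
    _ < ε := by linarith
end
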